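/- arXiv:2009.03389 — 7 statements merged into one kernel-verified Lean document; each statement's English description precedes it below -/
import Mathlib

section
/- Let R be a commutative ring and 𝔽 a filter of ideals in R such that R is 𝔽-h-local. Then for every 𝔽-torsion R-module N, the natural map N → ∏_𝔪 N_𝔪, whose components are the localization maps at the maximal ideals 𝔪 ∈ 𝔽, factors through the submodule ⊕_𝔪 N_𝔪 ⊆ ∏_𝔪 N_𝔪 and induces an R-module isomorphism N ≅ ⊕_𝔪 N_𝔪. Conversely, if 𝔽 is a filter of ideals in R such that every 𝔽-torsion R-module N is isomorphic as an R-module to ⊕_𝔪 N_𝔪 (direct sum over the maximal ideals 𝔪 ∈ 𝔽), then R is 𝔽-h-local. -/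
universe u

open CategoryTheory

noncomputable section

/-- `Ext^n_R(M, N)`, as an `R`-module, computed via the derived-functor `Ext`
bifunctor on the category of `R`-modules. -/
def extM (R : Type u) [CommRing R] (M N : Type u) [AddCommGroup M] [Module R M]
    [AddCommGroup N] [Module R N] (n : ℕ) : ModuleCat.{u} R :=
  ((_root_.Ext R (ModuleCat.{u} R) n).obj (Opposite.op (ModuleCat.of R M))).obj (ModuleCat.of R N)

/-- Contravariant functoriality of `Ext` in the first variable (pullback along `f`). -/
def extPull (R : Type u) [CommRing R] {M M' N : Type u} [AddCommGroup M] [Module R M]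
    [AddCommGroup M'] [Module R M'] [AddCommGroup N] [Module R N]
    (f : M' →ₗ[R] M) (n : ℕ) : extM R M N n →ₗ[R] extM R M' N n :=
  (((_root_.Ext R (ModuleCat.{u} R) n).map (ModuleCat.ofHom f).op).app (ModuleCat.of R N)).hom

/-- Covariant functoriality of `Ext` in the second variable (pushforward along `g`). -/
def extPush (R : Type u) [CommRing R] {M N N' : Type u} [AddCommGroup M] [Module R M]
    [AddCommGroup N] [Module R N] [AddCommGroup N'] [Module R N']
    (g : N →ₗ[R] N') (n : ℕ) : extM R M N n →ₗ[R] extM R M N' n :=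
  (((_root_.Ext R (ModuleCat.{u} R) n).obj (Opposite.op (ModuleCat.of R M))).map
    (ModuleCat.ofHom g)).hom

/-- An `R`-module `C` is a `t`-contramodule if `Hom_R(R[t⁻¹], C) = 0` and
`Ext¹_R(R[t⁻¹], C) = 0`, where `R[t⁻¹]` is the localization of `R` at the powers of `t`. -/
def IsTContra (R : Type u) [CommRing R] (t : R) (C : Type u) [AddCommGroup C]
    [Module R C] : Prop :=
  (∀ f : Localization.Away t →ₗ[R] C, f = 0) ∧
    Subsingleton (extM R (Localization.Away t) C 1)

/-- An `R`-module `C` is an `I`-contramodule if it is a `t`-contramodule for every `t ∈ I`. -/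
def IsIdealContra (R : Type u) [CommRing R] (I : Ideal R) (C : Type u) [AddCommGroup C]
    [Module R C] : Prop :=
  ∀ t ∈ I, IsTContra R t C

/-- A commutative ring is semilocal if it has only finitely many maximal ideals. -/
def IsSemilocal (T : Type u) [CommRing T] : Prop :=
  {I : Ideal T | I.IsMaximal}.Finite

/-- A commutative ring has Krull dimension zero if every prime ideal is maximal. -/
def IsKrullDimZero (T : Type u) [CommRing T] : Prop :=
  ∀ P : Ideal T, P.IsPrime → P.IsMaximal

/-- The structure map `algebraMap R U` is an epimorphism in the category of
(commutative) rings. -/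
def IsRingEpi (R U : Type u) [CommRing R] [CommRing U] [Algebra R U] : Prop :=
  ∀ (T : Type u) [CommRing T], ∀ f g : U →+* T,
    f.comp (algebraMap R U) = g.comp (algebraMap R U) → f = g

/-- The projective dimension of the `R`-module `M` is at most `1`: there is a short exact
sequence `0 → P₁ → P₀ → M → 0` with `P₀`, `P₁` projective. -/
def ProjDimLEOne (R : Type u) [CommRing R] (M : Type u) [AddCommGroup M] [Module R M] : Prop :=
  ∃ (P₁ P₀ : ModuleCat.{u} R) (f : P₁ →ₗ[R] P₀) (g : P₀ →ₗ[R] M),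
    Module.Projective R P₁ ∧ Module.Projective R P₀ ∧
      Function.Injective f ∧ Function.Surjective g ∧ LinearMap.range f = LinearMap.ker g

/-- A filter of ideals in a commutative ring `R`. -/
def IsIdealFilter (R : Type u) [CommRing R] (F : Set (Ideal R)) : Prop :=
  ⊤ ∈ F ∧ ∀ I J K : Ideal R, I ∈ F → J ∈ F → I ⊓ J ≤ K → K ∈ F

/-- A Gabriel filter of ideals in a commutative ring `R`. -/
def IsGabrielFilter (R : Type u) [CommRing R] (G : Set (Ideal R)) : Prop :=
  IsIdealFilter R G ∧
    ∀ J : Ideal R, (∃ I ∈ G, ∀ s ∈ I, J.colon (Ideal.span {s}) ∈ G) → J ∈ G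

/-- A filter of ideals has a base of finitely generated ideals. -/
def HasFGBase (R : Type u) [CommRing R] (F : Set (Ideal R)) : Prop :=
  ∀ J ∈ F, ∃ I ∈ F, I ≤ J ∧ I.FG

/-- An `R`-module `N` is `F`-torsion if the annihilator of every element belongs to `F`. -/
def IsFilterTorsion (R : Type u) [CommRing R] (F : Set (Ideal R)) (N : Type u)
    [AddCommGroup N] [Module R N] : Prop :=
  ∀ x : N, Ideal.torsionOf R N x ∈ F

/-- An `R`-module `N` is `I`-torsion if every `s ∈ I` acts locally nilpotently on `N`. -/
def IsIdealTorsion (R : Type u) [CommRing R] (I : Ideal R) (N : Type u)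
    [AddCommGroup N] [Module R N] : Prop :=
  ∀ x : N, ∀ s ∈ I, ∃ n : ℕ, 1 ≤ n ∧ s ^ n • x = 0

/-- The complement of a maximal ideal, as a submonoid. -/
def maxCompl {R : Type u} [CommRing R] {m : Ideal R} (hm : m.IsMaximal) : Submonoid R :=
  haveI := hm.isPrime
  m.primeCompl

end



/-- A commutative ring `R` is `F`-h-local (for a filter of ideals `F`) if every ideal in
`F` is contained in only finitely many maximal ideals and every prime ideal belonging to
`F` is contained in a unique maximal ideal. -/
def IsFHLocal (R : Type u) [CommRing R] (F : Set (Ideal R)) : Prop :=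
  (∀ I ∈ F, {m : Ideal R | m.IsMaximal ∧ I ≤ m}.Finite) ∧
    (∀ P ∈ F, (P : Ideal R).IsPrime → ∃! m : Ideal R, m.IsMaximal ∧ P ≤ m)

/-- The natural map from `N` to the product of its localizations at the maximal ideals
belonging to the filter `F`, with components the localization maps. -/
noncomputable def locMap (R : Type u) [CommRing R] (F : Set (Ideal R)) (N : Type u)
    [AddCommGroup N] [Module R N] :
    N →ₗ[R] ((m : {m : Ideal R // m.IsMaximal ∧ m ∈ F}) →
      LocalizedModule (maxCompl m.2.1) N) :=
  LinearMap.pi fun m => LocalizedModule.mkLinearMap (maxCompl m.2.1) N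


section Aux
variable {R : Type u} [CommRing R]

theorem mem_of_filter_le {F : Set (Ideal R)} (hF : IsIdealFilter R F) {I J : Ideal R}
    (hI : I ∈ F) (hIJ : I ≤ J) : J ∈ F :=
  hF.2 I I J hI hI (le_trans inf_le_left hIJ)

theorem locmk_eq_zero_iff {S : Submonoid R} {N : Type u} [AddCommGroup N] [Module R N]
    (x : N) (s : S) :
    LocalizedModule.mk x s = 0 ↔ ∃ u : R, u ∈ S ∧ u • x = 0 := by
  constructor
  · intro h
    rw [← LocalizedModule.zero_mk (1 : S), LocalizedModule.mk_eq] at h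
    obtain ⟨u, hu⟩ := h
    exact ⟨u, u.2, by simpa [Submonoid.smul_def] using hu⟩
  · rintro ⟨u, hu, h⟩
    rw [← LocalizedModule.zero_mk (1 : S), LocalizedModule.mk_eq]
    exact ⟨⟨u, hu⟩, by simpa [Submonoid.smul_def] using h⟩

/-- The annihilator of the image of `n` in the localization at the maximal ideal `m`. -/
noncomputable def annMk (m : Ideal R) (hm : m.IsMaximal) (N : Type u) [AddCommGroup N]
    [Module R N] (n : N) : Ideal R :=
  Ideal.torsionOf R (LocalizedModule (maxCompl hm) N) (LocalizedModule.mk n 1)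

theorem mem_annMk_iff {m : Ideal R} {hm : m.IsMaximal} {N : Type u} [AddCommGroup N]
    [Module R N] {n : N} {a : R} :
    a ∈ annMk m hm N n ↔ ∃ u : R, u ∉ m ∧ (u * a) • n = 0 := by
  rw [annMk, Ideal.mem_torsionOf_iff, LocalizedModule.smul'_mk, locmk_eq_zero_iff]
  simp [smul_smul]
  rfl

end Aux

section Aux2
variable {R : Type u} [CommRing R]

theorem locMap_apply (F : Set (Ideal R)) (N : Type u) [AddCommGroup N] [Module R N]
    (x : N) (m : {m : Ideal R // m.IsMaximal ∧ m ∈ F}) :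
    locMap R F N x m = LocalizedModule.mk x 1 := rfl

theorem eq_of_annMk_le {F : Set (Ideal R)} (hF : IsIdealFilter R F) (hloc : IsFHLocal R F)
    {N : Type u} [AddCommGroup N] [Module R N] {n : N} (hn : Ideal.torsionOf R N n ∈ F)
    {m q : Ideal R} (hm : m.IsMaximal) (hq : q.IsMaximal)
    (hle : annMk m hm N n ≤ q) : q = m := by
  have hqp := hq.isPrime
  have hmp := hm.isPrime
  have h1q : (1 : R) ∉ q := fun h => hq.ne_top ((Ideal.eq_top_iff_one q).mpr h)
  have h1m : (1 : R) ∉ m := fun h => hm.ne_top ((Ideal.eq_top_iff_one m).mpr h)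
  let S : Submonoid R :=
    { carrier := {r | ∃ s t : R, s ∉ q ∧ t ∉ m ∧ s * t = r}
      mul_mem' := by
        rintro a b ⟨s, t, hs, ht, rfl⟩ ⟨s', t', hs', ht', rfl⟩
        exact ⟨s * s', t * t', fun h => ((hqp.mem_or_mem h).elim hs hs'),
          fun h => ((hmp.mem_or_mem h).elim ht ht'), by ring⟩
      one_mem' := ⟨1, 1, h1q, h1m, mul_one 1⟩ }
  have hdisj : Disjoint ((Ideal.torsionOf R N n : Ideal R) : Set R) (S : Set R) := by
    rw [Set.disjoint_left]
    rintro a ha ⟨s, t, hs, ht, rfl⟩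
    refine hs (hle (mem_annMk_iff.mpr ⟨t, ht, ?_⟩))
    rw [mul_comm t s]
    exact (Ideal.mem_torsionOf_iff n _).mp ha
  obtain ⟨p, hp, hIp, hpS⟩ := Ideal.exists_le_prime_disjoint _ S hdisj
  have hpq : p ≤ q := by
    intro x hx
    by_contra hxq
    exact Set.disjoint_left.mp hpS hx ⟨x, 1, hxq, h1m, mul_one x⟩
  have hpm : p ≤ m := by
    intro x hx
    by_contra hxm
    exact Set.disjoint_left.mp hpS hx ⟨1, x, h1q, hxm, one_mul x⟩
  have hpF : p ∈ F := mem_of_filter_le hF hn hIp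
  obtain ⟨m', _, huniq⟩ := hloc.2 p hpF hp
  rw [huniq q ⟨hq, hpq⟩, huniq m ⟨hm, hpm⟩]

theorem annMk_coprime {F : Set (Ideal R)} (hF : IsIdealFilter R F) (hloc : IsFHLocal R F)
    {N : Type u} [AddCommGroup N] [Module R N] {n : N} (hn : Ideal.torsionOf R N n ∈ F)
    {m₁ m₂ : Ideal R} (h₁ : m₁.IsMaximal) (h₂ : m₂.IsMaximal) (hne : m₁ ≠ m₂) :
    IsCoprime (annMk m₁ h₁ N n) (annMk m₂ h₂ N n) := by
  rw [Ideal.isCoprime_iff_sup_eq]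
  by_contra hne'
  obtain ⟨q, hq, hle⟩ := Ideal.exists_le_maximal _ hne'
  exact hne ((eq_of_annMk_le hF hloc hn h₁ hq (le_trans le_sup_left hle)).symm.trans
    (eq_of_annMk_le hF hloc hn h₂ hq (le_trans le_sup_right hle)))

theorem exists_single {F : Set (Ideal R)} (hF : IsIdealFilter R F) (hloc : IsFHLocal R F)
    {N : Type u} [AddCommGroup N] [Module R N] (htor : IsFilterTorsion R F N)
    (m₀ : {m : Ideal R // m.IsMaximal ∧ m ∈ F}) (y : LocalizedModule (maxCompl m₀.2.1) N) :
    ∃ x : N, locMap R F N x m₀ = y ∧ ∀ m, m ≠ m₀ → locMap R F N x m = 0 := by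
  classical
  induction y using LocalizedModule.induction_on with
  | _ n s =>
  set I := Ideal.torsionOf R N n with hIdef
  have hIF : I ∈ F := htor n
  have hmax₀ : m₀.1.IsMaximal := m₀.2.1
  have hfin : {m : Ideal R | m.IsMaximal ∧ I ≤ m}.Finite := hloc.1 I hIF
  have hfin2 : {m : {m : Ideal R // m.IsMaximal ∧ m ∈ F} | I ≤ m.1}.Finite := by
    refine (hfin.preimage Subtype.val_injective.injOn).subset ?_
    intro m hm
    exact ⟨m.2.1, hm⟩
  let T : Finset {m : Ideal R // m.IsMaximal ∧ m ∈ F} := hfin2.toFinset.erase m₀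
  let J : {m : Ideal R // m.IsMaximal ∧ m ∈ F} → Ideal R := fun m => annMk m.1 m.2.1 N n
  have hco : IsCoprime (annMk m₀.1 hmax₀ N n) (⨅ j ∈ T, J j) := by
    refine Ideal.isCoprime_biInf fun j hj => ?_
    have hmaxj : j.1.IsMaximal := j.2.1
    exact annMk_coprime hF hloc hIF hmax₀ hmaxj
      (fun h => Finset.ne_of_mem_erase hj (Subtype.ext h.symm))
  obtain ⟨a, haJ, e, heJ, hae⟩ := Ideal.isCoprime_iff_exists.mp hco
  simp only [Submodule.mem_iInf] at heJ
  have hs1 : Ideal.span {(s : R)} ⊔ annMk m₀.1 hmax₀ N n = ⊤ := by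
    by_contra hne'
    obtain ⟨q, hq, hle⟩ := Ideal.exists_le_maximal _ hne'
    have hqm : q = m₀.1 := eq_of_annMk_le hF hloc hIF hmax₀ hq (le_trans le_sup_right hle)
    have hsq : (s : R) ∈ q := (le_trans le_sup_left hle) (Ideal.mem_span_singleton_self _)
    rw [hqm] at hsq
    exact s.2 hsq
  obtain ⟨y1, hy1, z1, hz1, hyz⟩ := Submodule.mem_sup.mp
    (hs1 ▸ Submodule.mem_top : (1 : R) ∈ Ideal.span {(s : R)} ⊔ annMk m₀.1 hmax₀ N n)
  obtain ⟨t, ht⟩ := Ideal.mem_span_singleton'.mp hy1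
  have hts : t * (s : R) - 1 ∈ annMk m₀.1 hmax₀ N n := by
    have h' : t * (s : R) - 1 = -z1 := by linear_combination ht + hyz
    rw [h']
    exact neg_mem hz1
  refine ⟨(t * e) • n, ?_, ?_⟩
  · rw [locMap_apply, LocalizedModule.mk_eq]
    obtain ⟨u₁, hu₁, h1⟩ := mem_annMk_iff.mp hts
    have h1e : 1 - e ∈ annMk m₀.1 hmax₀ N n := by
      have h' : 1 - e = a := by linear_combination -hae
      rw [h']; exact haJ
    obtain ⟨u₂, hu₂, h2⟩ := mem_annMk_iff.mp h1e
    refine ⟨⟨u₁ * u₂, fun h => ((hmax₀.isPrime.mem_or_mem h).elim hu₁ hu₂)⟩, ?_⟩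
    show (u₁ * u₂) • (s : R) • ((t * e) • n) = (u₁ * u₂) • (1 : R) • n
    rw [smul_smul, smul_smul, smul_smul]
    have expand : u₁ * u₂ * (s : R) * (t * e) =
        (u₂ * e) * (u₁ * (t * (s : R) - 1)) + u₁ * u₂ * 1 - u₁ * (u₂ * (1 - e)) := by ring
    rw [expand, sub_smul, add_smul, mul_smul (u₂ * e), h1, smul_zero, zero_add,
      mul_smul u₁, h2, smul_zero, sub_zero]
  · intro m hm
    rw [locMap_apply, locmk_eq_zero_iff]
    by_cases hIm : I ≤ m.1
    · have hmT : m ∈ T := Finset.mem_erase.mpr ⟨hm, hfin2.mem_toFinset.mpr hIm⟩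
      have hmaxm : m.1.IsMaximal := m.2.1
      have he' : e ∈ annMk m.1 hmaxm N n := heJ m hmT
      obtain ⟨u, hu, h⟩ := mem_annMk_iff.mp he'
      refine ⟨u, hu, ?_⟩
      rw [smul_smul, show u * (t * e) = t * (u * e) from by ring, mul_smul, h, smul_zero]
    · obtain ⟨c, hcI, hcm⟩ := SetLike.not_le_iff_exists.mp hIm
      refine ⟨c, hcm, ?_⟩
      rw [smul_smul, mul_comm c (t * e), mul_smul, (Ideal.mem_torsionOf_iff n c).mp hcI,
        smul_zero]

theorem quot_torsion {F : Set (Ideal R)} (hF : IsIdealFilter R F) {I : Ideal R} (hI : I ∈ F) :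
    IsFilterTorsion R F (R ⧸ I) := by
  intro x
  obtain ⟨a, rfl⟩ := Submodule.Quotient.mk_surjective I x
  refine mem_of_filter_le hF hI (fun c hc => ?_)
  rw [Ideal.mem_torsionOf_iff, ← Submodule.Quotient.mk_smul, Submodule.Quotient.mk_eq_zero,
    smul_eq_mul]
  exact Ideal.mul_mem_right a I hc

theorem quot_locmk_ne_zero {I m : Ideal R} (hm : m.IsMaximal) (hIm : I ≤ m) :
    (LocalizedModule.mk (Submodule.Quotient.mk 1 : R ⧸ I) (1 : maxCompl hm)) ≠ 0 := by
  rw [Ne, locmk_eq_zero_iff]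
  rintro ⟨u, hu, h⟩
  rw [← Submodule.Quotient.mk_smul, Submodule.Quotient.mk_eq_zero, smul_eq_mul, mul_one] at h
  exact hu (hIm h)

end Aux2

/-- Let `R` be a commutative ring and `F` a filter of ideals of `R`.
If `R` is `F`-h-local, then for every `F`-torsion `R`-module `N` the natural map
`N → ∏_𝔪 N_𝔪` (components the localization maps, over maximal ideals `𝔪 ∈ F`) factors
through the submodule `⊕_𝔪 N_𝔪 ⊆ ∏_𝔪 N_𝔪` and induces an isomorphism `N ≅ ⊕_𝔪 N_𝔪`
(i.e. every `locMap x` has finite support, `locMap` is injective, and every finitely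
supported family is in its range). Conversely, if every `F`-torsion `R`-module `N` is
isomorphic as an `R`-module to `⊕_𝔪 N_𝔪`, then `R` is `F`-h-local. -/
theorem stmt6 (R : Type u) [CommRing R] (F : Set (Ideal R)) (hF : IsIdealFilter R F) :
    (IsFHLocal R F →
      ∀ (N : Type u) [AddCommGroup N] [Module R N], IsFilterTorsion R F N →
        (∀ x : N, {m : {m : Ideal R // m.IsMaximal ∧ m ∈ F} |
            locMap R F N x m ≠ 0}.Finite) ∧
        Function.Injective (locMap R F N) ∧
        (∀ g : (m : {m : Ideal R // m.IsMaximal ∧ m ∈ F}) →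
            LocalizedModule (maxCompl m.2.1) N,
          {m | g m ≠ 0}.Finite → ∃ x : N, locMap R F N x = g)) ∧
    ((∀ (N : Type u) [AddCommGroup N] [Module R N], IsFilterTorsion R F N →
        Nonempty (N ≃ₗ[R] DirectSum {m : Ideal R // m.IsMaximal ∧ m ∈ F}
          (fun m => LocalizedModule (maxCompl m.2.1) N))) →
      IsFHLocal R F) := by
  classical
  constructor
  · intro hloc N _ _ htor
    refine ⟨?_, ?_, ?_⟩
    · intro x
      have hfin := hloc.1 _ (htor x)
      refine (hfin.preimage Subtype.val_injective.injOn).subset ?_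
      intro m hm
      refine ⟨m.2.1, fun c hc => ?_⟩
      by_contra hcm
      exact hm ((locmk_eq_zero_iff x 1).mpr
        ⟨c, hcm, (Ideal.mem_torsionOf_iff x c).mp hc⟩)
    · rw [injective_iff_map_eq_zero]
      intro x hx
      by_contra hx0
      have hne : Ideal.torsionOf R N x ≠ ⊤ := by
        intro h
        exact hx0 ((Ideal.torsionOf_eq_top_iff (R := R) (M := N) x).mp h)
      obtain ⟨q, hq, hle⟩ := Ideal.exists_le_maximal _ hne
      have hqF : q ∈ F := mem_of_filter_le hF (htor x) hle
      have h0 := congrFun hx ⟨q, hq, hqF⟩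
      rw [locMap_apply] at h0
      obtain ⟨u, hu, hux⟩ := (locmk_eq_zero_iff x 1).mp h0
      exact hu (hle ((Ideal.mem_torsionOf_iff x u).mpr hux))
    · intro g hgfin
      choose x hx1 hx2 using fun m => exists_single hF hloc htor m (g m)
      refine ⟨∑ m ∈ hgfin.toFinset, x m, ?_⟩
      have hsum : locMap R F N (∑ m ∈ hgfin.toFinset, x m) =
          ∑ m ∈ hgfin.toFinset, locMap R F N (x m) := map_sum _ _ _
      funext m
      rw [hsum, Finset.sum_apply]
      by_cases hm : m ∈ hgfin.toFinset
      · rw [Finset.sum_eq_single m (fun b _ hb => hx2 b m (Ne.symm hb))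
          (fun h => absurd hm h)]
        exact hx1 m
      · have hg0 : g m = 0 := by
          by_contra h
          exact hm (hgfin.mem_toFinset.mpr h)
        rw [hg0]
        exact Finset.sum_eq_zero fun b hb => hx2 b m (fun h => hm (by rw [h]; exact hb))
  · intro h
    constructor
    · intro I hI
      obtain ⟨φ⟩ := h (R ⧸ I) (quot_torsion hF hI)
      set g := φ (Submodule.Quotient.mk 1) with hg
      refine Set.Finite.subset ((g.support.finite_toSet).image Subtype.val) ?_
      rintro m ⟨hm, hIm⟩
      have hmF : m ∈ F := mem_of_filter_le hF hI hIm
      refine ⟨⟨m, hm, hmF⟩, ?_, rfl⟩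
      rw [Finset.mem_coe, DFinsupp.mem_support_iff]
      intro hg0
      have hmax : (⟨m, hm, hmF⟩ : {m : Ideal R // m.IsMaximal ∧ m ∈ F}).2.1 = hm := rfl
      set z : LocalizedModule (maxCompl hm) (R ⧸ I) :=
        LocalizedModule.mk (Submodule.Quotient.mk 1) 1 with hzdef
      have hz0 : z ≠ 0 := quot_locmk_ne_zero hm hIm
      set w := φ.symm (DirectSum.lof R {m : Ideal R // m.IsMaximal ∧ m ∈ F}
        (fun m => LocalizedModule (maxCompl m.2.1) (R ⧸ I)) ⟨m, hm, hmF⟩ z) with hw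
      obtain ⟨a, ha⟩ := Submodule.Quotient.mk_surjective I w
      have key : DirectSum.lof R {m : Ideal R // m.IsMaximal ∧ m ∈ F}
          (fun m => LocalizedModule (maxCompl m.2.1) (R ⧸ I)) ⟨m, hm, hmF⟩ z = a • g := by
        rw [← φ.apply_symm_apply (DirectSum.lof R _ _ ⟨m, hm, hmF⟩ z), ← hw, ← ha, hg,
          ← map_smul]
        congr 1
        rw [← Submodule.Quotient.mk_smul, smul_eq_mul, mul_one]
      have hzz := congrArg (DirectSum.component R {m : Ideal R // m.IsMaximal ∧ m ∈ F}
        (fun m => LocalizedModule (maxCompl m.2.1) (R ⧸ I)) ⟨m, hm, hmF⟩) key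
      rw [DirectSum.component.lof_self, map_smul, ← DirectSum.apply_eq_component, hg0,
        smul_zero] at hzz
      exact hz0 hzz
    · intro P hPF hP
      obtain ⟨m, hm⟩ := Ideal.exists_le_maximal P hP.ne_top
      refine ⟨m, ⟨hm.1, hm.2⟩, ?_⟩
      rintro m' ⟨hm', hle'⟩
      by_contra hne
      have hm'F : m' ∈ F := mem_of_filter_le hF hPF hle'
      have hmF : m ∈ F := mem_of_filter_le hF hPF hm.2
      obtain ⟨φ⟩ := h (R ⧸ P) (quot_torsion hF hPF)
      set i₁ : {m : Ideal R // m.IsMaximal ∧ m ∈ F} := ⟨m', hm', hm'F⟩ with hi₁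
      set i₂ : {m : Ideal R // m.IsMaximal ∧ m ∈ F} := ⟨m, hm.1, hmF⟩ with hi₂
      have hne' : i₁ ≠ i₂ := fun hh => hne (congrArg Subtype.val hh)
      set z₁ : LocalizedModule (maxCompl hm') (R ⧸ P) :=
        LocalizedModule.mk (Submodule.Quotient.mk 1) 1 with hz₁def
      set z₂ : LocalizedModule (maxCompl hm.1) (R ⧸ P) :=
        LocalizedModule.mk (Submodule.Quotient.mk 1) 1 with hz₂def
      have hz₁0 : z₁ ≠ 0 := quot_locmk_ne_zero hm' hle'
      have hz₂0 : z₂ ≠ 0 := quot_locmk_ne_zero hm.1 hm.2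
      set L₁ := DirectSum.lof R {m : Ideal R // m.IsMaximal ∧ m ∈ F}
        (fun m => LocalizedModule (maxCompl m.2.1) (R ⧸ P)) i₁ with hL₁
      set L₂ := DirectSum.lof R {m : Ideal R // m.IsMaximal ∧ m ∈ F}
        (fun m => LocalizedModule (maxCompl m.2.1) (R ⧸ P)) i₂ with hL₂
      set w₁ := φ.symm (L₁ z₁) with hw₁
      set w₂ := φ.symm (L₂ z₂) with hw₂
      obtain ⟨a₁, ha₁⟩ := Submodule.Quotient.mk_surjective P w₁
      obtain ⟨a₂, ha₂⟩ := Submodule.Quotient.mk_surjective P w₂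
      have ha₁P : a₁ ∉ P := by
        intro hmem
        have hw0 : w₁ = 0 := by
          rw [← ha₁, Submodule.Quotient.mk_eq_zero]
          exact hmem
        have : L₁ z₁ = 0 := by
          rw [← φ.apply_symm_apply (L₁ z₁), ← hw₁, hw0, map_zero]
        have h2 := congrArg (DirectSum.component R {m : Ideal R // m.IsMaximal ∧ m ∈ F}
          (fun m => LocalizedModule (maxCompl m.2.1) (R ⧸ P)) i₁) this
        rw [hL₁, DirectSum.component.lof_self, map_zero] at h2
        exact hz₁0 h2
      have ha₂P : a₂ ∉ P := by
        intro hmem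
        have hw0 : w₂ = 0 := by
          rw [← ha₂, Submodule.Quotient.mk_eq_zero]
          exact hmem
        have : L₂ z₂ = 0 := by
          rw [← φ.apply_symm_apply (L₂ z₂), ← hw₂, hw0, map_zero]
        have h2 := congrArg (DirectSum.component R {m : Ideal R // m.IsMaximal ∧ m ∈ F}
          (fun m => LocalizedModule (maxCompl m.2.1) (R ⧸ P)) i₂) this
        rw [hL₂, DirectSum.component.lof_self, map_zero] at h2
        exact hz₂0 h2
      have hww : a₂ • w₁ = a₁ • w₂ := by
        rw [← ha₁, ← ha₂, ← Submodule.Quotient.mk_smul, ← Submodule.Quotient.mk_smul,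
          smul_eq_mul, smul_eq_mul, mul_comm]
      have happ : a₂ • L₁ z₁ = a₁ • L₂ z₂ := by
        calc a₂ • L₁ z₁ = a₂ • φ w₁ := by rw [hw₁, φ.apply_symm_apply]
          _ = φ (a₂ • w₁) := (map_smul φ a₂ w₁).symm
          _ = φ (a₁ • w₂) := by rw [hww]
          _ = a₁ • φ w₂ := map_smul φ a₁ w₂
          _ = a₁ • L₂ z₂ := by rw [hw₂, φ.apply_symm_apply]
      have haz : a₂ • z₁ = 0 := by
        have h2 := congrArg (DirectSum.component R {m : Ideal R // m.IsMaximal ∧ m ∈ F}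
          (fun m => LocalizedModule (maxCompl m.2.1) (R ⧸ P)) i₁) happ
        rw [hL₁, hL₂, map_smul, map_smul, DirectSum.component.lof_self,
          DirectSum.component.of, dif_neg (Ne.symm hne'), smul_zero] at h2
        exact h2
      have hw₁0 : a₂ • w₁ = 0 := by
        apply φ.injective
        rw [map_smul, hw₁, φ.apply_symm_apply, map_zero, ← map_smul L₁, haz, map_zero]
      rw [← ha₁, ← Submodule.Quotient.mk_smul, Submodule.Quotient.mk_eq_zero,
        smul_eq_mul] at hw₁0
      rcases hP.mem_or_mem hw₁0 with hmem | hmem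
      exacts [ha₂P hmem, ha₁P hmem]
end

section
/- Let R be a commutative ring and 𝔾 a Gabriel filter of ideals in R with a base of finitely generated ideals such that for every I ∈ 𝔾 the ring R/I is semilocal of Krull dimension zero. Let 𝔪 be a maximal ideal of R with 𝔪 ∈ 𝔾. Then an R-module N is a 𝔾-torsion module on which every element of R \ 𝔪 acts invertibly (i.e., a 𝔾-torsion R_𝔪-module) if and only if N is an 𝔪-torsion R-module. -/
universe u

open CategoryTheory

section helpers

variable {R : Type u} [CommRing R] {G : Set (Ideal R)}

/-- A filter of ideals (in our sense) is closed upward. -/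
lemma filter_up (hF : IsIdealFilter R G) {I K : Ideal R} (hI : I ∈ G) (h : I ≤ K) : K ∈ G :=
  hF.2 I I K hI hI (le_trans inf_le_left h)

/-- A Gabriel filter is closed under products of ideals. -/
lemma gabriel_mul (hG : IsGabrielFilter R G) {I J : Ideal R} (hI : I ∈ G) (hJ : J ∈ G) :
    I * J ∈ G := by
  apply hG.2 (I * J)
  refine ⟨I, hI, fun s hs => ?_⟩
  apply filter_up hG.1 hJ
  intro r hr
  rw [Ideal.mem_colon_span_singleton, mul_comm r s]
  exact Ideal.mul_mem_mul hs hr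

lemma gabriel_pow (hG : IsGabrielFilter R G) {I : Ideal R} (hI : I ∈ G) (n : ℕ) :
    I ^ n ∈ G := by
  induction n with
  | zero => simpa using hG.1.1
  | succ k ih => rw [pow_succ]; exact gabriel_mul hG ih hI

end helpers

/-- Let `R` be a commutative ring and `G` a Gabriel filter of ideals in
`R` with a base of finitely generated ideals such that `R/I` is semilocal of Krull
dimension zero for every `I ∈ G`. Let `𝔪 ∈ G` be a maximal ideal of `R`. Then an
`R`-module `N` is a `G`-torsion module on which every element of `R \ 𝔪` acts invertibly
(i.e. a `G`-torsion `R_𝔪`-module) if and only if `N` is an `𝔪`-torsion `R`-module. -/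
theorem stmt7 (R : Type u) [CommRing R] (G : Set (Ideal R))
    (hGab : IsGabrielFilter R G) (hfg : HasFGBase R G)
    (hnil : ∀ I ∈ G, IsSemilocal (R ⧸ I) ∧ IsKrullDimZero (R ⧸ I))
    (m : Ideal R) (hm : m.IsMaximal) (hmG : m ∈ G)
    (N : Type u) [AddCommGroup N] [Module R N] :
    (IsFilterTorsion R G N ∧ ∀ s ∉ m, Function.Bijective fun x : N => s • x) ↔
      IsIdealTorsion R m N := by
  constructor
  · rintro ⟨hT, hB⟩ x s hs
    set J := Ideal.torsionOf R N x with hJdef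
    have hJ : J ∈ G := hT x
    have hzero := (hnil J hJ).2
    have hfin := (hnil J hJ).1
    -- primes over J other than m
    set S : Set (Ideal R) := {P : Ideal R | P.IsPrime ∧ J ≤ P ∧ P ≠ m} with hSdef
    have hkerJ : RingHom.ker (Ideal.Quotient.mk J) = J := Ideal.mk_ker
    have hsurj : Function.Surjective (Ideal.Quotient.mk J) := Ideal.Quotient.mk_surjective
    have hSfin : S.Finite := by
      have himg : Set.MapsTo (fun P : Ideal R => P.map (Ideal.Quotient.mk J)) S
          {I : Ideal (R ⧸ J) | I.IsMaximal} := by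
        rintro P ⟨hP, hJP, -⟩
        have : (P.map (Ideal.Quotient.mk J)).IsPrime :=
          Ideal.map_isPrime_of_surjective hsurj (hkerJ.le.trans hJP)
        exact hzero _ this
      have hinj : Set.InjOn (fun P : Ideal R => P.map (Ideal.Quotient.mk J)) S := by
        rintro P ⟨hP, hJP, -⟩ Q ⟨hQ, hJQ, -⟩ hPQ
        have h1 : Ideal.comap (Ideal.Quotient.mk J) (P.map (Ideal.Quotient.mk J)) = P := by
          rw [Ideal.comap_map_of_surjective _ hsurj, ← RingHom.ker_eq_comap_bot, hkerJ,
            sup_eq_left.2 hJP]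
        have h2 : Ideal.comap (Ideal.Quotient.mk J) (Q.map (Ideal.Quotient.mk J)) = Q := by
          rw [Ideal.comap_map_of_surjective _ hsurj, ← RingHom.ker_eq_comap_bot, hkerJ,
            sup_eq_left.2 hJQ]
        rw [← h1, ← h2]
        exact congrArg (Ideal.comap (Ideal.Quotient.mk J)) hPQ
      exact Set.Finite.of_finite_image (hfin.subset himg.image_subset) hinj
    -- for each P in S, pick u ∈ P, u ∉ m
    have hpick : ∀ P ∈ S, ∃ u, u ∈ P ∧ u ∉ m := by
      rintro P ⟨hP, hJP, hPm⟩
      by_contra hc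
      push_neg at hc
      have hPle : P ≤ m := fun u hu => hc u hu
      apply hPm
      -- map both to R/J and use zero-dimensionality
      have hJm : J ≤ m := le_trans hJP hPle
      have hmprime : (m.map (Ideal.Quotient.mk J)).IsPrime := by
        haveI := hm.isPrime
        exact Ideal.map_isPrime_of_surjective hsurj (hkerJ.le.trans hJm)
      haveI := hP
      have hPprime : (P.map (Ideal.Quotient.mk J)).IsPrime :=
        Ideal.map_isPrime_of_surjective hsurj (hkerJ.le.trans hJP)
      have hPmax := hzero _ hPprime
      have hle : P.map (Ideal.Quotient.mk J) ≤ m.map (Ideal.Quotient.mk J) :=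
        Ideal.map_mono hPle
      have heq : P.map (Ideal.Quotient.mk J) = m.map (Ideal.Quotient.mk J) :=
        hPmax.eq_of_le hmprime.ne_top hle
      have h1 : Ideal.comap (Ideal.Quotient.mk J) (P.map (Ideal.Quotient.mk J)) = P := by
        rw [Ideal.comap_map_of_surjective _ hsurj, ← RingHom.ker_eq_comap_bot, hkerJ,
          sup_eq_left.2 hJP]
      have h2 : Ideal.comap (Ideal.Quotient.mk J) (m.map (Ideal.Quotient.mk J)) = m := by
        rw [Ideal.comap_map_of_surjective _ hsurj, ← RingHom.ker_eq_comap_bot, hkerJ,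
          sup_eq_left.2 hJm]
      rw [← h1, ← h2, heq]
    classical
    choose! uf hu1 hu2 using hpick
    haveI := hm.isPrime
    set u : R := ∏ P ∈ hSfin.toFinset, uf P with hudef
    have hum : u ∉ m := by
      have : u ∈ m.primeCompl := Submonoid.prod_mem _ (fun P hP => by
        have hPS : P ∈ S := hSfin.mem_toFinset.mp hP
        exact hu2 P hPS)
      exact this
    have hsu : s * u ∈ J.radical := by
      rw [Ideal.radical_eq_sInf, Submodule.mem_sInf]
      rintro Q ⟨hJQ, hQ⟩
      by_cases hQm : Q = m
      · subst hQm; exact Ideal.mul_mem_right u Q hs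
      · have hQS : Q ∈ S := ⟨hQ, hJQ, hQm⟩
        have : uf Q ∣ u := Finset.dvd_prod_of_mem uf (hSfin.mem_toFinset.mpr hQS)
        obtain ⟨c, hc⟩ := this
        rw [hc, ← mul_assoc]
        exact Ideal.mul_mem_right c Q (Ideal.mul_mem_left Q s (hu1 Q hQS))
    obtain ⟨n, hn⟩ := Ideal.mem_radical_iff.mp hsu
    have hn1 : (s * u) ^ (n + 1) ∈ J := by
      rw [pow_succ']
      exact J.mul_mem_left _ hn
    refine ⟨n + 1, Nat.le_add_left 1 n, ?_⟩
    -- u^(n+1) acts injectively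
    have humn : u ^ (n + 1) ∉ m := fun h => hum (hm.isPrime.mem_of_pow_mem _ h)
    have hinj := (hB _ humn).1
    apply hinj
    show u ^ (n + 1) • s ^ (n + 1) • x = u ^ (n + 1) • (0 : N)
    rw [smul_zero, ← mul_smul, ← mul_pow, mul_comm u s]
    exact (Ideal.mem_torsionOf_iff x _).mp hn1
  · intro hTor
    have hbij : ∀ s ∉ m, Function.Bijective fun x : N => s • x := by
      intro s hs
      obtain ⟨r, t, htm, hrt⟩ := hm.exists_inv hs
      -- t ∈ m, r * s + t = 1
      have key : ∀ y : N, ∃ c : R, s • (c • y) = y := by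
        intro y
        obtain ⟨n, -, hny⟩ := hTor y t htm
        refine ⟨r * ∑ i ∈ Finset.range n, t ^ i, ?_⟩
        have hgeom : (1 - t ^ n) = s * (r * ∑ i ∈ Finset.range n, t ^ i) := by
          linear_combination geom_sum_mul t n - (∑ i ∈ Finset.range n, t ^ i) * hrt
        rw [← mul_smul, ← hgeom, sub_smul, one_smul, hny, sub_zero]
      constructor
      · intro a b hab
        simp only at hab
        have hd : s • (a - b) = 0 := by rw [smul_sub, hab, sub_self]
        obtain ⟨c, hc⟩ := key (a - b)
        have : a - b = 0 := by
          rw [← hc, smul_comm s c, hd, smul_zero]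
        exact sub_eq_zero.mp this
      · intro y
        obtain ⟨c, hc⟩ := key y
        exact ⟨c • y, hc⟩
    refine ⟨?_, hbij⟩
    intro x
    obtain ⟨I, hIG, hIm, hIfg⟩ := hfg m hmG
    have hrad : I ≤ (Ideal.torsionOf R N x).radical := by
      intro s hsI
      obtain ⟨n, -, hnx⟩ := hTor x s (hIm hsI)
      exact Ideal.mem_radical_iff.mpr ⟨n, (Ideal.mem_torsionOf_iff x _).mpr hnx⟩
    obtain ⟨k, hk⟩ := Ideal.exists_pow_le_of_le_radical_of_fg hrad hIfg
    exact filter_up hGab.1 (gabriel_pow hGab hIG k) hk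
end

section
/- Let R be a commutative ring and 𝔾 a Gabriel filter of ideals in R with a base of finitely generated ideals such that for every I ∈ 𝔾 the ring R/I is semilocal of Krull dimension zero. Then an R-module N is 𝔾-torsion if and only if it is isomorphic to a direct sum ⊕_𝔪 N(𝔪) over the maximal ideals 𝔪 of R belonging to 𝔾, where each N(𝔪) is an 𝔪-torsion R-module. Such a decomposition is unique when it exists, and the summands can be recovered as the localizations N(𝔪) ≅ N_𝔪. -/
universe u

open CategoryTheory

namespace Stmt8Aux

section FilterLemmas
variable {R : Type u} [CommRing R] {G : Set (Ideal R)}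

lemma G_mono (h : IsIdealFilter R G) {I J : Ideal R} (hI : I ∈ G) (hIJ : I ≤ J) : J ∈ G :=
  h.2 I I J hI hI (by simpa using hIJ)

lemma G_finset_inf (h : IsIdealFilter R G) {ι : Type*} (s : Finset ι) (g : ι → Ideal R)
    (hg : ∀ i ∈ s, g i ∈ G) : s.inf g ∈ G := by
  classical
  induction s using Finset.induction_on with
  | empty => simpa using h.1
  | insert a s' hns ih =>
    rw [Finset.inf_insert]
    exact h.2 _ _ _ (hg a (by simp)) (ih fun i hi => hg i (by simp [hi])) le_rfl

/-- Gabriel-filter induction: if each generator of a finitely generated member ideal acts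
locally nilpotently on `x`, then the annihilator of `x` is in the filter. -/
lemma ann_mem_of_gen_nilpotent (hGab : IsGabrielFilter R G)
    {M : Type*} [AddCommGroup M] [Module R M] (F : Finset R)
    (hF : Ideal.span (F : Set R) ∈ G) :
    ∀ (k : ℕ) (n : R → ℕ) (x : M), (∑ f ∈ F, n f) ≤ k →
      (∀ f ∈ F, f ^ (n f) • x = 0) → Ideal.torsionOf R M x ∈ G := by
  classical
  intro k
  induction k with
  | zero =>
    intro n x hsum hx
    rcases F.eq_empty_or_nonempty with hFe | ⟨f, hf⟩
    · refine hGab.2 _ ⟨Ideal.span (F : Set R), hF, fun s hs => ?_⟩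
      have hs0 : s = 0 := by
        simpa [hFe, Ideal.span_empty, Ideal.mem_bot] using hs
      have : (Ideal.torsionOf R M x).colon (Ideal.span {s}) = ⊤ := by
        rw [eq_top_iff]
        intro t _
        rw [Ideal.mem_colon_span_singleton, hs0, mul_zero]
        exact Submodule.zero_mem _
      rw [this]; exact hGab.1.1
    · have hnf : n f = 0 := by
        have := Finset.sum_le_sum_of_subset (Finset.singleton_subset_iff.mpr hf) (f := n)
        simp only [Finset.sum_singleton] at this
        omega
      have : x = 0 := by simpa [hnf] using hx f hf
      subst this
      simpa [Ideal.torsionOf] using hGab.1.1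
  | succ k ih =>
    intro n x hsum hx
    by_cases hzero : ∃ f ∈ F, n f = 0
    · obtain ⟨f, hf, hnf⟩ := hzero
      have : x = 0 := by simpa [hnf] using hx f hf
      subst this
      simpa [Ideal.torsionOf] using hGab.1.1
    push_neg at hzero
    refine hGab.2 _ ⟨Ideal.span (F : Set R), hF, fun s hs => ?_⟩
    have hcomp : ∀ f ∈ F, Ideal.torsionOf R M (f • x) ∈ G := by
      intro f hf
      refine ih (Function.update n f (n f - 1)) (f • x) ?_ ?_
      · have hupd : (∑ g ∈ F, Function.update n f (n f - 1) g)
            = (∑ g ∈ F, n g) - 1 := by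
          rw [Finset.sum_update_of_mem hf]
          have h1 : 1 ≤ n f := (hzero f hf).bot_lt
          have := Finset.add_sum_erase F n hf
          have h2 : F \ {f} = F.erase f := by
            ext g; simp [Finset.mem_erase, and_comm]
          rw [h2]
          omega
        have h1 : 1 ≤ n f := (hzero f hf).bot_lt
        have hge : 1 ≤ ∑ g ∈ F, n g := by
          calc 1 ≤ n f := h1
          _ ≤ ∑ g ∈ F, n g := Finset.single_le_sum (fun _ _ => Nat.zero_le _) hf
        omega
      · intro g hg
        by_cases hgf : g = f
        · subst hgf
          rw [Function.update_self]
          have h1 : 1 ≤ n g := (hzero g hg).bot_lt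
          rw [smul_smul, ← pow_succ]
          have : n g - 1 + 1 = n g := by omega
          rw [this]; exact hx g hg
        · rw [Function.update_of_ne hgf]
          rw [smul_comm]
          rw [hx g hg, smul_zero]
    have hle : F.inf (fun f => Ideal.torsionOf R M (f • x))
        ≤ (Ideal.torsionOf R M x).colon (Ideal.span {s}) := by
      intro t ht
      rw [Ideal.mem_colon_span_singleton]
      obtain ⟨c, -, hc⟩ := Submodule.mem_span_finset.mp (by simpa using hs)
      rw [Ideal.mem_torsionOf_iff]
      have hz : (t * s) • x = ∑ f ∈ F, (c f * t) • (f • x) := by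
        rw [← hc, Finset.mul_sum, Finset.sum_smul]
        refine Finset.sum_congr rfl fun f hf => ?_
        rw [smul_smul, smul_eq_mul]
        ring_nf
      rw [hz]
      refine Finset.sum_eq_zero fun f hf => ?_
      have hmem : t ∈ Ideal.torsionOf R M (f • x) :=
        (Finset.inf_le hf : F.inf (fun f => Ideal.torsionOf R M (f • x)) ≤ _) ht
      rw [Ideal.mem_torsionOf_iff] at hmem
      rw [mul_smul, hmem, smul_zero]
    exact G_mono hGab.1 (G_mono hGab.1
      (G_finset_inf hGab.1 F _ hcomp) hle) le_rfl

end FilterLemmas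

section ZeroDim
variable {R : Type u} [CommRing R]

/-- In a zero-dimensional commutative ring, some power of any element divides its next power. -/
lemma zerodim_pow (T : Type u) [CommRing T] (hT : ∀ P : Ideal T, P.IsPrime → P.IsMaximal)
    (s : T) : ∃ n : ℕ, 1 ≤ n ∧ ∃ b : T, s ^ n = s ^ (n + 1) * b := by
  classical
  set W : Submonoid T :=
    { carrier := {t | ∃ n : ℕ, ∃ b : T, t = s ^ n * (1 - s * b)}
      one_mem' := ⟨0, 0, by ring⟩
      mul_mem' := by
        rintro a a' ⟨n, b, rfl⟩ ⟨n', b', rfl⟩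
        exact ⟨n + n', b + b' - s * b * b', by ring⟩ } with hW
  by_cases h0 : (0 : T) ∈ W
  · obtain ⟨n, b, hnb⟩ := h0
    have key : s ^ n = s ^ (n + 1) * b := by
      have : s ^ n * (1 - s * b) = 0 := hnb.symm
      have h2 : s ^ n - s ^ n * (s * b) = 0 := by ring_nf; ring_nf at this; linear_combination this
      rw [sub_eq_zero] at h2
      rw [h2]; ring
    rcases Nat.eq_zero_or_pos n with hn | hn
    · subst hn
      refine ⟨1, le_rfl, b, ?_⟩
      have k1 : (1 : T) = s * b := by simpa using key
      calc s ^ 1 = s * 1 := by ring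
      _ = s * (s * b) := by rw [← k1]
      _ = s ^ (1 + 1) * b := by ring
    · exact ⟨n, hn, b, key⟩
  · exfalso
    have hdisj : Disjoint ((⊥ : Ideal T) : Set T) (W : Set T) := by
      rw [Set.disjoint_left]
      intro a ha haW
      rw [SetLike.mem_coe, Ideal.mem_bot] at ha
      exact h0 (ha ▸ haW)
    obtain ⟨P, hP, -, hPd⟩ := Ideal.exists_le_prime_disjoint ⊥ W hdisj
    have hsW : s ∈ W := ⟨1, 0, by ring⟩
    have hsP : s ∉ P := fun hs => Set.disjoint_left.mp hPd hs hsW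
    obtain ⟨y, i, hiP, hyi⟩ := (hT P hP).exists_inv hsP
    have hiW : i ∈ W := ⟨0, y, by linear_combination hyi⟩
    exact Set.disjoint_left.mp hPd hiP hiW

/-- Primes over `I` are maximal when `R ⧸ I` has Krull dimension zero. -/
lemma prime_over_isMaximal {I : Ideal R}
    (hz : ∀ P : Ideal (R ⧸ I), P.IsPrime → P.IsMaximal)
    {P : Ideal R} (hP : P.IsPrime) (hIP : I ≤ P) : P.IsMaximal := by
  have hsurj : Function.Surjective (Ideal.Quotient.mk I) := Ideal.Quotient.mk_surjective
  haveI := hP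
  have hk : RingHom.ker (Ideal.Quotient.mk I) ≤ P := by rw [Ideal.mk_ker]; exact hIP
  haveI hQ : (P.map (Ideal.Quotient.mk I)).IsPrime :=
    Ideal.map_isPrime_of_surjective hsurj hk
  haveI := hz _ hQ
  have hPe : P = (P.map (Ideal.Quotient.mk I)).comap (Ideal.Quotient.mk I) := by
    rw [Ideal.comap_map_of_surjective _ hsurj, ← RingHom.ker_eq_comap_bot, Ideal.mk_ker,
      sup_eq_left.mpr hIP]
  rw [hPe]
  exact Ideal.comap_isMaximal_of_surjective _ hsurj

/-- The set of maximal ideals over `I` is finite when `R ⧸ I` is semilocal. -/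
lemma maximals_over_finite {I : Ideal R}
    (hs : {J : Ideal (R ⧸ I) | J.IsMaximal}.Finite) :
    {m : Ideal R | m.IsMaximal ∧ I ≤ m}.Finite := by
  have hsurj : Function.Surjective (Ideal.Quotient.mk I) := Ideal.Quotient.mk_surjective
  have hcm : ∀ m : Ideal R, m.IsMaximal → I ≤ m →
      (m.map (Ideal.Quotient.mk I)).comap (Ideal.Quotient.mk I) = m := by
    intro m hm hIm
    rw [Ideal.comap_map_of_surjective _ hsurj, ← RingHom.ker_eq_comap_bot, Ideal.mk_ker,
      sup_eq_left.mpr hIm]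
  apply Set.Finite.of_finite_image (f := fun m => m.map (Ideal.Quotient.mk I))
  · apply hs.subset
    rintro J ⟨m, ⟨hm, hIm⟩, rfl⟩
    simp only [Set.mem_setOf_eq]
    have hne : m.map (Ideal.Quotient.mk I) ≠ ⊤ := by
      intro htop
      have := hcm m hm hIm
      rw [htop, Ideal.comap_top] at this
      exact hm.ne_top this.symm
    rcases Ideal.map_eq_top_or_isMaximal_of_surjective _ hsurj hm with h | h
    · exact absurd h hne
    · exact h
  · rintro m ⟨hm, hIm⟩ m' ⟨hm', hIm'⟩ hmm
    simp only at hmm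
    rw [← hcm m hm hIm, ← hcm m' hm' hIm', hmm]

lemma nilpotent_mod_of_primes {J : Ideal R} {t : R}
    (ht : ∀ P : Ideal R, P.IsPrime → J ≤ P → t ∈ P) : ∃ k : ℕ, t ^ k ∈ J := by
  have : IsNilpotent (Ideal.Quotient.mk J t) := by
    rw [nilpotent_iff_mem_prime]
    intro Q hQ
    haveI := hQ
    have hcom : (Q.comap (Ideal.Quotient.mk J)).IsPrime := Ideal.IsPrime.comap _
    have hJle : J ≤ Q.comap (Ideal.Quotient.mk J) := by
      intro a ha
      rw [Ideal.mem_comap, Ideal.Quotient.eq_zero_iff_mem.mpr ha]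
      exact Q.zero_mem
    exact ht _ hcom hJle
  obtain ⟨k, hk⟩ := this
  refine ⟨k, ?_⟩
  rw [← Ideal.Quotient.eq_zero_iff_mem, map_pow]
  exact hk

end ZeroDim

section Gam
variable {R : Type u} [CommRing R]
variable (N : Type u) [AddCommGroup N] [Module R N]

/-- The submodule of `m`-locally-nilpotent elements. -/
def gam (m : Ideal R) : Submodule R N where
  carrier := {x | ∀ s ∈ m, ∃ k : ℕ, s ^ k • x = 0}
  zero_mem' := fun s _ => ⟨0, by simp⟩
  add_mem' := by
    rintro a b ha hb s hs
    obtain ⟨k, hk⟩ := ha s hs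
    obtain ⟨l, hl⟩ := hb s hs
    refine ⟨k + l, ?_⟩
    have h1 : s ^ (k + l) • a = 0 := by rw [pow_add, mul_comm, mul_smul, hk, smul_zero]
    have h2 : s ^ (k + l) • b = 0 := by rw [pow_add, mul_smul, hl, smul_zero]
    rw [smul_add, h1, h2, add_zero]
  smul_mem' := by
    rintro c a ha s hs
    obtain ⟨k, hk⟩ := ha s hs
    exact ⟨k, by rw [smul_comm, hk, smul_zero]⟩

variable {N} {G : Set (Ideal R)}

/-- Key spanning lemma. -/
lemma gam_spanning (hGab : IsGabrielFilter R G)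
    (hnil : ∀ I ∈ G, ({J : Ideal (R ⧸ I) | J.IsMaximal}).Finite ∧
      (∀ P : Ideal (R ⧸ I), P.IsPrime → P.IsMaximal)) :
    ∀ (k : ℕ) (x : N), Ideal.torsionOf R N x ∈ G →
      ∀ s : Finset (Ideal R),
        (∀ m : Ideal R, m.IsMaximal → Ideal.torsionOf R N x ≤ m → m ∈ s) →
        s.card ≤ k →
        x ∈ ⨆ m : {m : Ideal R // m.IsMaximal ∧ m ∈ G}, gam N m.1 := by
  classical
  intro k
  induction k with
  | zero =>
    intro x hx s hs hcard
    by_cases htop : Ideal.torsionOf R N x = ⊤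
    · have : (1 : R) • x = 0 := by
        rw [← Ideal.mem_torsionOf_iff, htop]; trivial
      rw [one_smul] at this
      rw [this]; exact Submodule.zero_mem _
    · obtain ⟨m, hm, hxm⟩ := Ideal.exists_le_maximal _ htop
      have := hs m hm hxm
      have : 1 ≤ s.card := Finset.card_pos.mpr ⟨m, this⟩
      omega
  | succ k ih =>
    intro x hx s hs hcard
    set I := Ideal.torsionOf R N x with hI
    by_cases htop : I = ⊤
    · have : (1 : R) • x = 0 := by
        rw [← Ideal.mem_torsionOf_iff, ← hI, htop]; trivial
      rw [one_smul] at this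
      rw [this]; exact Submodule.zero_mem _
    obtain ⟨m1, hm1, hxm1⟩ := Ideal.exists_le_maximal _ htop
    have hm1s : m1 ∈ s := hs m1 hm1 hxm1
    have hm1G : m1 ∈ G := G_mono hGab.1 hx hxm1
    set b : Ideal R → R := fun J =>
      if h : ∃ p : R × R, p.1 ∈ m1 ∧ p.2 ∈ J ∧ p.1 + p.2 = 1 then h.choose.2 else 1 with hbdef
    have hb1 : ∀ J : Ideal R, 1 - b J ∈ m1 := by
      intro J
      rw [hbdef]
      by_cases h : ∃ p : R × R, p.1 ∈ m1 ∧ p.2 ∈ J ∧ p.1 + p.2 = 1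
      · simp only [dif_pos h]
        obtain ⟨h1, h2, h3⟩ := h.choose_spec
        have : 1 - h.choose.2 = h.choose.1 := by linear_combination -h3
        rw [this]; exact h1
      · simp only [dif_neg h, sub_self]; exact Submodule.zero_mem _
    have hb2 : ∀ J : Ideal R, J.IsMaximal → J ≠ m1 → b J ∈ J := by
      intro J hJ hJne
      have hex : ∃ p : R × R, p.1 ∈ m1 ∧ p.2 ∈ J ∧ p.1 + p.2 = 1 := by
        have hnle : ¬ m1 ≤ J := by
          intro hle
          exact hJne (hm1.eq_of_le hJ.ne_top hle).symm
        obtain ⟨a, ham1, haJ⟩ := SetLike.not_le_iff_exists.mp hnle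
        obtain ⟨y, i, hiJ, hyi⟩ := hJ.exists_inv haJ
        exact ⟨(y * a, i), Ideal.mul_mem_left _ _ ham1, hiJ, hyi⟩
      rw [hbdef]
      simp only [dif_pos hex]
      exact hex.choose_spec.2.1
    set s' := s.erase m1 with hs'
    obtain ⟨s0, hs0m1, hs0notmem⟩ :
        ∃ s0 ∈ m1, ∀ J ∈ s', J.IsMaximal → s0 ∉ J := by
      refine ⟨1 - ∏ J ∈ s', b J, ?_, ?_⟩
      · have : Ideal.Quotient.mk m1 (∏ J ∈ s', b J) = 1 := by
          rw [map_prod]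
          rw [show (1 : R ⧸ m1) = ∏ _J ∈ s', 1 by simp]
          refine Finset.prod_congr rfl fun J _ => ?_
          have h := hb1 J
          rw [← Ideal.Quotient.eq_zero_iff_mem, map_sub, map_one, sub_eq_zero] at h
          exact h.symm
        rw [← Ideal.Quotient.eq_zero_iff_mem, map_sub, map_one, this, sub_self]
      · intro J hJs' hJ hmem
        have hJne : J ≠ m1 := Finset.ne_of_mem_erase hJs'
        have hprod : (∏ K ∈ s', b K) ∈ J := by
          rw [← Finset.prod_erase_mul _ _ hJs']
          exact Ideal.mul_mem_left _ _ (hb2 J hJ hJne)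
        have : (1 : R) ∈ J := by
          have := J.add_mem hmem hprod
          simpa using this
        exact hJ.ne_top (Ideal.eq_top_of_isUnit_mem _ this isUnit_one)
    have hIG := hx
    obtain ⟨hsemi, hzd⟩ := hnil I hx
    obtain ⟨n, hn1, bb, hbb⟩ := zerodim_pow (R ⧸ I) hzd (Ideal.Quotient.mk I s0)
    obtain ⟨c, rfl⟩ := Ideal.Quotient.mk_surjective bb
    have hbbR : s0 ^ n - s0 ^ (n + 1) * c ∈ I := by
      rw [← Ideal.Quotient.eq_zero_iff_mem, map_sub, map_mul, map_pow, map_pow, hbb, sub_self]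
    set e : R := (s0 * c) ^ n with hedef
    have hclaim : ∀ j : ℕ, s0 ^ n - s0 ^ n * (s0 * c) ^ j ∈ I := by
      intro j
      induction j with
      | zero => simpa using I.zero_mem
      | succ j ihj =>
        have h1 : (s0 ^ n - s0 ^ n * (s0 * c) ^ j) * (s0 * c) ∈ I := Ideal.mul_mem_right _ _ ihj
        have h2 : s0 ^ n * (s0 * c) - s0 ^ n ∈ I := by
          have := hbbR
          have heq : s0 ^ n * (s0 * c) - s0 ^ n
              = -(s0 ^ n - s0 ^ (n + 1) * c) := by ring
          rw [heq]; exact I.neg_mem this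
        have := I.sub_mem h1 h2
        have heq : s0 ^ n - s0 ^ n * (s0 * c) ^ (j + 1)
            = (s0 ^ n - s0 ^ n * (s0 * c) ^ j) * (s0 * c) - (s0 ^ n * (s0 * c) - s0 ^ n) := by
          ring
        rw [heq]; exact this
    have he2 : e - e * e ∈ I := by
      have h1 := hclaim n
      have h2 : (s0 ^ n - s0 ^ n * (s0 * c) ^ n) * c ^ n ∈ I := Ideal.mul_mem_right _ _ h1
      have heq : e - e * e = (s0 ^ n - s0 ^ n * (s0 * c) ^ n) * c ^ n := by
        rw [hedef]; ring
      rw [heq]; exact h2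
    have hse : s0 ^ n * (1 - e) ∈ I := by
      have h1 := hclaim n
      have heq : s0 ^ n * (1 - e) = s0 ^ n - s0 ^ n * (s0 * c) ^ n := by rw [hedef]; ring
      rw [heq]; exact h1
    have hem1 : e ∈ m1 := by
      rw [hedef]
      exact Ideal.pow_mem_of_mem _ (Ideal.mul_mem_right _ _ hs0m1) n hn1
    have hxsplit : x = (1 - e) • x + e • x := by
      rw [← add_smul]; ring_nf; rw [one_smul]
    have htors1 : I ⊔ Ideal.span {e} ≤ Ideal.torsionOf R N ((1 - e) • x) := by
      apply sup_le
      · intro r hr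
        rw [Ideal.mem_torsionOf_iff, smul_comm]
        have : r • x = 0 := by rwa [← Ideal.mem_torsionOf_iff, ← hI]
        rw [this, smul_zero]
      · rw [Ideal.span_le, Set.singleton_subset_iff, SetLike.mem_coe,
          Ideal.mem_torsionOf_iff, smul_smul]
        have : e * (1 - e) = e - e * e := by ring
        rw [this]
        have : (e - e * e) • x = 0 := by rwa [← Ideal.mem_torsionOf_iff, ← hI]
        exact this
    have hx1gam : (1 - e) • x ∈ gam N m1 := by
      intro t ht
      have hprimes : ∀ P : Ideal R, P.IsPrime → I ⊔ Ideal.span {e} ≤ P → t ∈ P := by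
        intro P hP hle
        have hIP : I ≤ P := le_trans le_sup_left hle
        have heP : e ∈ P := hle (le_sup_right (a := I) (Ideal.subset_span rfl))
        have hPmax : P.IsMaximal := prime_over_isMaximal hzd hP hIP
        have hPs : P ∈ s := hs P hPmax (hI ▸ hIP)
        by_cases hPm1 : P = m1
        · rw [hPm1]; exact ht
        · exfalso
          have hPs' : P ∈ s' := Finset.mem_erase.mpr ⟨hPm1, hPs⟩
          have hs0P : s0 ∉ P := hs0notmem P hPs' hPmax
          have h1eP : 1 - e ∈ P := by
            have := hle (le_sup_left (b := Ideal.span {e}) hse)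
            rcases hP.mul_mem_iff_mem_or_mem.mp this with h | h
            · exact absurd (hP.mem_of_pow_mem _ h) hs0P
            · exact h
          have : (1 : R) ∈ P := by
            have := P.add_mem h1eP heP
            simpa using this
          exact hP.ne_top (Ideal.eq_top_of_isUnit_mem _ this isUnit_one)
      obtain ⟨kk, hkk⟩ := nilpotent_mod_of_primes hprimes
      exact ⟨kk, by
        have := htors1 hkk
        rwa [Ideal.mem_torsionOf_iff] at this⟩
    have htors2I : I ≤ Ideal.torsionOf R N (e • x) := by
      intro r hr
      rw [Ideal.mem_torsionOf_iff, smul_comm]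
      have : r • x = 0 := by rwa [← Ideal.mem_torsionOf_iff, ← hI]
      rw [this, smul_zero]
    have htors2e : (1 - e) ∈ Ideal.torsionOf R N (e • x) := by
      rw [Ideal.mem_torsionOf_iff, smul_smul]
      have h : (1 - e) * e = e - e * e := by ring
      rw [h]
      have : (e - e * e) • x = 0 := by rwa [← Ideal.mem_torsionOf_iff, ← hI]
      exact this
    have hx2 : e • x ∈ ⨆ m : {m : Ideal R // m.IsMaximal ∧ m ∈ G}, gam N m.1 := by
      refine ih (e • x) (G_mono hGab.1 hIG htors2I) s' ?_ ?_
      · intro m hm hle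
        refine Finset.mem_erase.mpr ⟨?_, hs m hm (le_trans htors2I hle)⟩
        intro hmeq
        have h1 : 1 - e ∈ m := hle htors2e
        have h2 : e ∈ m := hmeq ▸ hem1
        have : (1 : R) ∈ m := by
          have := m.add_mem h1 h2; simpa using this
        exact hm.ne_top (Ideal.eq_top_of_isUnit_mem _ this isUnit_one)
      · have h1 : s'.card = s.card - 1 := by rw [hs']; exact Finset.card_erase_of_mem hm1s
        have h2 : 1 ≤ s.card := Finset.card_pos.mpr ⟨m1, hm1s⟩
        omega
    rw [hxsplit]
    refine Submodule.add_mem _ ?_ hx2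
    exact Submodule.mem_iSup_of_mem ⟨m1, hm1, hm1G⟩ hx1gam

/-- Elements killed by something outside the prime `m`. -/
def killOutside (m : Ideal R) (hm : m.IsPrime) : Submodule R N where
  carrier := {x | ∃ u : R, u ∉ m ∧ u • x = 0}
  zero_mem' := ⟨1, fun h => hm.ne_top (Ideal.eq_top_of_isUnit_mem _ h isUnit_one), smul_zero 1⟩
  add_mem' := by
    rintro a b ⟨u, hu, hua⟩ ⟨v, hv, hvb⟩
    refine ⟨u * v, fun h => ((hm.mem_or_mem h).elim hu hv), ?_⟩
    have h1 : (u * v) • a = 0 := by rw [mul_comm, mul_smul, hua, smul_zero]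
    have h2 : (u * v) • b = 0 := by rw [mul_smul, hvb, smul_zero]
    rw [smul_add, h1, h2, add_zero]
  smul_mem' := by
    rintro c a ⟨u, hu, hua⟩
    exact ⟨u, hu, by rw [smul_comm, hua, smul_zero]⟩

lemma gam_killOutside_eq_zero {m : Ideal R} (hm : m.IsMaximal) {x : N}
    (hx : x ∈ gam N m) (u : R) (hu : u ∉ m) (hux : u • x = 0) : x = 0 := by
  obtain ⟨y, w, hwm, hyw⟩ := hm.exists_inv hu
  have hxw : x = w • x := by
    have h : x = (y * u + w) • x := by rw [hyw, one_smul]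
    rwa [add_smul, mul_smul, hux, smul_zero, zero_add] at h
  have hpow : ∀ k : ℕ, x = w ^ k • x := by
    intro k
    induction k with
    | zero => simp
    | succ k ihk =>
      rw [pow_succ, mul_smul]
      rw [← hxw, ← ihk]
  obtain ⟨k, hk⟩ := hx w hwm
  rw [hpow k, hk]

/-- Independence of the `gam` submodules over distinct maximal ideals in `G`. -/
lemma gam_indep :
    iSupIndep (fun m : {m : Ideal R // m.IsMaximal ∧ m ∈ G} => gam N m.1) := by
  intro i
  rw [Submodule.disjoint_def]
  intro x hxi hxrest
  have hK : (⨆ (j : {m : Ideal R // m.IsMaximal ∧ m ∈ G}) (_ : j ≠ i), gam N j.1)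
      ≤ killOutside i.1 i.2.1.isPrime := by
    refine iSup_le fun j => iSup_le fun hji => ?_
    intro y hy
    have hnle : ¬ j.1 ≤ i.1 := by
      intro hle
      exact hji (Subtype.ext (j.2.1.eq_of_le i.2.1.ne_top hle))
    obtain ⟨t, htj, hti⟩ := SetLike.not_le_iff_exists.mp hnle
    obtain ⟨k, hk⟩ := hy t htj
    refine ⟨t ^ k, fun h => hti (i.2.1.isPrime.mem_of_pow_mem _ h), hk⟩
  obtain ⟨u, hu, hux⟩ := hK hxrest
  exact gam_killOutside_eq_zero i.2.1 hxi u hu hux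

/-- If `t ∉ m` and `C` is `m`-torsion, `t` acts bijectively. -/
lemma smul_bijective_of_torsion {m : Ideal R} (hm : m.IsMaximal)
    {C : Type*} [AddCommGroup C] [Module R C]
    (hC : ∀ x : C, ∀ s ∈ m, ∃ n : ℕ, 1 ≤ n ∧ s ^ n • x = 0)
    {t : R} (ht : t ∉ m) : Function.Bijective (fun y : C => t • y) := by
  constructor
  · intro y₁ y₂ hy
    simp only at hy
    have h0 : t • (y₁ - y₂) = 0 := by rw [smul_sub, hy, sub_self]
    obtain ⟨c, w, hwm, hcw⟩ := hm.exists_inv ht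
    have hsub : y₁ - y₂ = w • (y₁ - y₂) := by
      have h : y₁ - y₂ = (c * t + w) • (y₁ - y₂) := by rw [hcw, one_smul]
      rwa [add_smul, mul_smul, h0, smul_zero, zero_add] at h
    have hpow : ∀ k : ℕ, y₁ - y₂ = w ^ k • (y₁ - y₂) := by
      intro k
      induction k with
      | zero => simp
      | succ k ihk => rw [pow_succ, mul_smul, ← hsub, ← ihk]
    obtain ⟨n, -, hn⟩ := hC (y₁ - y₂) w hwm
    have h := hpow n
    rw [hn] at h
    exact sub_eq_zero.mp h
  · intro y
    have htop : Ideal.torsionOf R C y ⊔ Ideal.span {t} = ⊤ := by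
      by_contra hne
      obtain ⟨m', hm', hle⟩ := Ideal.exists_le_maximal _ hne
      have hmm' : m ≤ m' := by
        intro a ham
        obtain ⟨n, hn1, hny⟩ := hC y a ham
        have : a ^ n ∈ m' := hle (le_sup_left (b := Ideal.span {t})
          ((Ideal.mem_torsionOf_iff _ _).mpr hny))
        exact hm'.isPrime.mem_of_pow_mem _ this
      have : m = m' := hm.eq_of_le hm'.ne_top hmm'
      have htm' : t ∈ m' := hle (le_sup_right (a := Ideal.torsionOf R C y)
        (Ideal.subset_span rfl))
      rw [← this] at htm'
      exact ht htm'
    have h1 : (1 : R) ∈ Ideal.torsionOf R C y ⊔ Ideal.span {t} := htop ▸ Submodule.mem_top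
    obtain ⟨a, ha, bb, hbb, hab⟩ := Submodule.mem_sup.mp h1
    obtain ⟨c, hc⟩ := Ideal.mem_span_singleton'.mp hbb
    refine ⟨c • y, ?_⟩
    have hay : a • y = 0 := (Ideal.mem_torsionOf_iff _ _).mp ha
    calc t • c • y = (c * t) • y := by rw [mul_smul, smul_comm]
    _ = bb • y := by rw [hc]
    _ = (a + bb) • y := by rw [add_smul, hay, zero_add]
    _ = y := by rw [hab, one_smul]

end Gam

end Stmt8Aux

/-- Let `R` be a commutative ring and `G` a Gabriel filter of ideals in
`R` with a base of finitely generated ideals such that `R/I` is semilocal of Krull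
dimension zero for every `I ∈ G`. Then an `R`-module `N` is `G`-torsion if and only if it
is isomorphic to a direct sum `⊕_𝔪 N(𝔪)` over the maximal ideals `𝔪 ∈ G`, where each
`N(𝔪)` is an `𝔪`-torsion `R`-module. Moreover, for any such decomposition the summands
are recovered as the localizations `N(𝔪) ≅ N_𝔪` (whence the decomposition is unique). -/
theorem stmt8 (R : Type u) [CommRing R] (G : Set (Ideal R))
    (hGab : IsGabrielFilter R G) (hfg : HasFGBase R G)
    (hnil : ∀ I ∈ G, IsSemilocal (R ⧸ I) ∧ IsKrullDimZero (R ⧸ I))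
    (N : Type u) [AddCommGroup N] [Module R N] :
    (IsFilterTorsion R G N ↔
      ∃ N' : {m : Ideal R // m.IsMaximal ∧ m ∈ G} → ModuleCat.{u} R,
        (∀ m, IsIdealTorsion R m.1 (N' m)) ∧
          Nonempty (N ≃ₗ[R] DirectSum {m : Ideal R // m.IsMaximal ∧ m ∈ G}
            (fun m => (N' m : Type u)))) ∧
    (∀ N' : {m : Ideal R // m.IsMaximal ∧ m ∈ G} → ModuleCat.{u} R,
      (∀ m, IsIdealTorsion R m.1 (N' m)) →
      Nonempty (N ≃ₗ[R] DirectSum {m : Ideal R // m.IsMaximal ∧ m ∈ G}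
        (fun m => (N' m : Type u))) →
      ∀ m : {m : Ideal R // m.IsMaximal ∧ m ∈ G},
        Nonempty ((N' m : Type u) ≃ₗ[R] LocalizedModule (maxCompl m.2.1) N)) := by
  classical
  open Stmt8Aux in
  constructor
  · constructor
    · -- forward: torsion → decomposition
      intro htor
      have htopsup : (⨆ m : {m : Ideal R // m.IsMaximal ∧ m ∈ G}, gam N m.1) = ⊤ := by
        rw [eq_top_iff]
        intro x _
        have hx : Ideal.torsionOf R N x ∈ G := htor x
        have hfin : {m : Ideal R | m.IsMaximal ∧ Ideal.torsionOf R N x ≤ m}.Finite :=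
          maximals_over_finite (hnil _ hx).1
        exact gam_spanning hGab hnil hfin.toFinset.card x hx hfin.toFinset
          (fun m hm hle => hfin.mem_toFinset.mpr ⟨hm, hle⟩) le_rfl
      have hint : DirectSum.IsInternal
          (fun m : {m : Ideal R // m.IsMaximal ∧ m ∈ G} => gam N m.1) :=
        (DirectSum.isInternal_submodule_iff_iSupIndep_and_iSup_eq_top _).mpr
          ⟨gam_indep, htopsup⟩
      refine ⟨fun m => ModuleCat.of R (gam N m.1), ?_, ?_⟩
      · intro m
        show IsIdealTorsion R m.1 (gam N m.1)
        intro x s hs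
        obtain ⟨k, hk⟩ := x.2 s hs
        refine ⟨k + 1, by omega, ?_⟩
        have h : s ^ (k + 1) • (x : N) = 0 := by
          rw [pow_succ, mul_comm, mul_smul, hk, smul_zero]
        exact Subtype.ext h
      · exact ⟨(LinearEquiv.ofBijective (DirectSum.coeLinearMap _) hint).symm⟩
    · -- backward: decomposition → torsion
      rintro ⟨N', htors, ⟨e⟩⟩
      intro x
      set z := e x with hz
      have hcomp : ∀ (m : {m : Ideal R // m.IsMaximal ∧ m ∈ G}) (y : (N' m : Type u)),
          Ideal.torsionOf R (N' m) y ∈ G := by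
        intro m y
        obtain ⟨I', hI'G, hI'le, F, hF⟩ := hfg m.1 m.2.2
        set nf : R → ℕ := fun f =>
          if h : ∃ n : ℕ, 1 ≤ n ∧ f ^ n • y = 0 then h.choose else 0 with hnf
        refine ann_mem_of_gen_nilpotent hGab F (by rw [hF]; exact hI'G)
          (∑ f ∈ F, nf f) nf y le_rfl ?_
        intro f hf
        have hfm : f ∈ m.1 := hI'le (hF ▸ Ideal.subset_span hf)
        have hex : ∃ n : ℕ, 1 ≤ n ∧ f ^ n • y = 0 := htors m y f hfm
        rw [hnf]
        simp only [dif_pos hex]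
        exact hex.choose_spec.2
      have hJle : z.support.inf (fun m => Ideal.torsionOf R (N' m) (z m))
          ≤ Ideal.torsionOf R N x := by
        intro r hr
        rw [Ideal.mem_torsionOf_iff]
        have hrz : r • z = 0 := by
          apply DFinsupp.ext
          intro m
          rw [DFinsupp.smul_apply]
          by_cases hm : m ∈ z.support
          · have := (Finset.inf_le hm :
              z.support.inf (fun m => Ideal.torsionOf R (N' m) (z m)) ≤ _) hr
            rw [Ideal.mem_torsionOf_iff] at this
            exact this
          · rw [DFinsupp.notMem_support_iff.mp hm, smul_zero]
            rfl
        have : e (r • x) = 0 := by rw [map_smul, ← hz, hrz]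
        have := congrArg e.symm this
        rwa [e.symm_apply_apply, map_zero] at this
      exact G_mono hGab.1
        (G_finset_inf hGab.1 z.support (fun m => Ideal.torsionOf R (N' m) (z m))
          (fun m _ => hcomp m (z m))) hJle
  · -- third clause: summands are localizations
    rintro N' htors ⟨e⟩ m
    set S := maxCompl m.2.1 with hS
    set f : N →ₗ[R] (N' m : Type u) :=
      (DirectSum.component R {m : Ideal R // m.IsMaximal ∧ m ∈ G}
        (fun m => (N' m : Type u)) m).comp (e : N →ₗ[R] _) with hf
    have hfapp : ∀ x : N, f x = e x m := fun x => rfl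
    haveI hloc : IsLocalizedModule S f := by
      constructor
      · intro s
        rw [Module.End.isUnit_iff]
        have hb := smul_bijective_of_torsion m.2.1
          (fun x t ht => htors m x t ht) (t := (s : R)) s.2
        have hfun : ⇑((algebraMap R (Module.End R (N' m : Type u))) (s : R))
            = fun y : (N' m : Type u) => (s : R) • y := funext fun y => rfl
        rw [hfun]
        exact hb
      · intro y
        refine ⟨⟨e.symm (DirectSum.lof R _ (fun m => (N' m : Type u)) m y), 1⟩, ?_⟩
        rw [one_smul, hfapp, e.apply_symm_apply]
        exact (DirectSum.lof_apply (R := R)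
          (M := fun m : {m : Ideal R // m.IsMaximal ∧ m ∈ G} => (N' m : Type u)) m y).symm
      · intro x₁ x₂ hx
        set w := e x₁ - e x₂ with hw
        have hwm : w m = 0 := by
          rw [hw, DFinsupp.sub_apply]
          have h1 := hfapp x₁
          have h2 := hfapp x₂
          rw [← h1, ← h2, hx, sub_self]
        have hchoose : ∀ m' : {m : Ideal R // m.IsMaximal ∧ m ∈ G}, m' ≠ m →
            ∃ u : R, u ∉ m.1 ∧ u • (w m') = 0 := by
          intro m' hne
          have hnle : ¬ m'.1 ≤ m.1 := fun hle =>
            hne (Subtype.ext (m'.2.1.eq_of_le m.2.1.ne_top hle))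
          obtain ⟨t, htm', htm⟩ := SetLike.not_le_iff_exists.mp hnle
          obtain ⟨n, -, hn⟩ := htors m' (w m') t htm'
          exact ⟨t ^ n, fun h => htm (m.2.1.isPrime.mem_of_pow_mem _ h), hn⟩
        set uu : {m : Ideal R // m.IsMaximal ∧ m ∈ G} → R := fun m' =>
          if h : ∃ u : R, u ∉ m.1 ∧ u • (w m') = 0 then h.choose else 1 with huu
        have huu1 : ∀ m' ∈ w.support, uu m' ∉ m.1 ∧ uu m' • (w m') = 0 := by
          intro m' hm'
          have hne : m' ≠ m := by
            intro hcon
            apply DFinsupp.mem_support_iff.mp hm'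
            rw [hcon, hwm]
          have hex := hchoose m' hne
          rw [huu]
          simp only [dif_pos hex]
          exact hex.choose_spec
        set c : R := ∏ m' ∈ w.support, uu m' with hc
        have hcS : c ∈ S := by
          apply Submonoid.prod_mem
          intro m' hm'
          exact (huu1 m' hm').1
        have hcw : c • w = 0 := by
          apply DFinsupp.ext
          intro m'
          rw [DFinsupp.smul_apply]
          by_cases hm' : m' ∈ w.support
          · rw [hc, ← Finset.prod_erase_mul _ _ hm', mul_smul, (huu1 m' hm').2, smul_zero]
            rfl
          · rw [DFinsupp.notMem_support_iff.mp hm', smul_zero]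
            rfl
        refine ⟨⟨c, hcS⟩, ?_⟩
        have hsub : c • (e x₁) - c • (e x₂) = 0 := by
          rw [← smul_sub, ← hw, hcw]
        have heq : e (c • x₁) = e (c • x₂) := by
          rw [map_smul, map_smul]
          exact sub_eq_zero.mp hsub
        have := e.injective heq
        exact this
    exact ⟨(IsLocalizedModule.iso S f).symm⟩
end

section
/- Let R be a commutative ring and 𝔪 ⊆ R a maximal ideal. Then every element of R \ 𝔪 acts invertibly on any 𝔪-contramodule R-module C; that is, the R-module structure of C extends (uniquely) to an R_𝔪-module structure, where R_𝔪 is the localization of R at 𝔪. -/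
universe u

open CategoryTheory

namespace Stmt9Aux

noncomputable section

variable {R : Type u} [CommRing R]

/-- generator t^{-n} in the away-localization -/
def tgen (t : R) (n : ℕ) : Localization.Away t :=
  Localization.mk 1 ⟨t ^ n, n, rfl⟩

lemma tgen_rel (t : R) (n : ℕ) : t • tgen t (n + 1) = tgen t n := by
  rw [tgen, tgen, Localization.smul_mk, Localization.mk_eq_mk_iff, Localization.r_iff_exists]
  exact ⟨1, by simp [pow_succ, mul_comm]⟩

/-- the telescope differential eₙ ↦ eₙ - t e_{n+1} -/
def tdiff (t : R) : (ℕ →₀ R) →ₗ[R] (ℕ →₀ R) :=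
  LinearMap.id - t • Finsupp.lmapDomain R R (· + 1)

lemma tdiff_single (t : R) (n : ℕ) (r : R) :
    tdiff t (Finsupp.single n r) =
      Finsupp.single n r - Finsupp.single (n + 1) (t * r) := by
  simp [tdiff, Finsupp.lmapDomain, Finsupp.mapDomain_single, Finsupp.smul_single']

/-- the augmentation eₙ ↦ t^{-n} -/
def taug (t : R) : (ℕ →₀ R) →ₗ[R] Localization.Away t :=
  Finsupp.lsum ℕ fun n => LinearMap.toSpanSingleton R _ (tgen t n)

lemma taug_single (t : R) (n : ℕ) (r : R) :
    taug t (Finsupp.single n r) = r • tgen t n := by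
  simp [taug, LinearMap.toSpanSingleton]

lemma taug_surj (t : R) : Function.Surjective (taug t) := by
  intro x
  refine Localization.induction_on x ?_
  rintro ⟨r, s⟩
  obtain ⟨n, hn⟩ := s.2
  refine ⟨Finsupp.single n r, ?_⟩
  rw [taug_single, tgen, Localization.smul_mk]
  congr 1
  · simp
  · exact Subtype.ext hn

lemma taug_tdiff (t : R) : (taug t).comp (tdiff t) = 0 := by
  refine Finsupp.lhom_ext fun n r => ?_
  simp only [LinearMap.comp_apply, tdiff_single, map_sub, taug_single, LinearMap.zero_apply]
  rw [← tgen_rel t n, smul_smul, mul_comm r t]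
  simp [smul_smul]

lemma single_sub_mem_range (t : R) (n k : ℕ) (r : R) :
    Finsupp.single n r - Finsupp.single (n + k) (t ^ k * r) ∈ LinearMap.range (tdiff t) := by
  induction k with
  | zero => simp
  | succ k ih =>
      have h2 : Finsupp.single (n + k) (t ^ k * r) -
          Finsupp.single (n + k + 1) (t * (t ^ k * r)) ∈ LinearMap.range (tdiff t) :=
        ⟨Finsupp.single (n + k) (t ^ k * r), tdiff_single t _ _⟩
      have := Submodule.add_mem _ ih h2
      simpa [pow_succ, mul_comm, mul_assoc, mul_left_comm, add_assoc] using this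

lemma reduce_to_single (t : R) (x : ℕ →₀ R) :
    ∃ (N : ℕ) (r : R), x - Finsupp.single N r ∈ LinearMap.range (tdiff t) := by
  induction x using Finsupp.induction with
  | zero => exact ⟨0, 0, by simp⟩
  | single_add a b f _ _ ih =>
      obtain ⟨N, r, hr⟩ := ih
      refine ⟨max a N, t ^ (max a N - a) * b + t ^ (max a N - N) * r, ?_⟩
      have h1 : Finsupp.single a b - Finsupp.single (a + (max a N - a)) (t ^ (max a N - a) * b)
          ∈ LinearMap.range (tdiff t) := single_sub_mem_range t a _ b
      have h2 : Finsupp.single N r - Finsupp.single (N + (max a N - N)) (t ^ (max a N - N) * r)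
          ∈ LinearMap.range (tdiff t) := single_sub_mem_range t N _ r
      rw [Nat.add_sub_cancel' (le_max_left a N)] at h1
      rw [Nat.add_sub_cancel' (le_max_right a N)] at h2
      have heq : (Finsupp.single a b + f) -
          Finsupp.single (max a N) (t ^ (max a N - a) * b + t ^ (max a N - N) * r) =
          (Finsupp.single a b - Finsupp.single (max a N) (t ^ (max a N - a) * b)) +
            ((Finsupp.single N r - Finsupp.single (max a N) (t ^ (max a N - N) * r)) +
              (f - Finsupp.single N r)) := by
        rw [Finsupp.single_add]; abel
      rw [heq]
      exact Submodule.add_mem _ h1 (Submodule.add_mem _ h2 hr)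

lemma ker_le_range (t : R) : LinearMap.ker (taug t) ≤ LinearMap.range (tdiff t) := by
  intro x hx
  obtain ⟨N, r, hr⟩ := reduce_to_single t x
  have hker : ∀ y ∈ LinearMap.range (tdiff t), taug t y = 0 := by
    rintro y ⟨z, rfl⟩
    have := congrFun (congrArg DFunLike.coe (taug_tdiff t)) z
    simpa using this
  have hsr : taug t (Finsupp.single N r) = 0 := by
    have := hker _ hr
    rw [map_sub, LinearMap.mem_ker.mp hx] at this
    rwa [zero_sub, neg_eq_zero] at this
  -- from taug (single N r) = 0 deduce ∃ k, t^k * r = 0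
  rw [taug_single, tgen, Localization.smul_mk] at hsr
  rw [show (0 : Localization.Away t) = Localization.mk 0 1 from by
        rw [Localization.mk_zero]] at hsr
  rw [Localization.mk_eq_mk_iff, Localization.r_iff_exists] at hsr
  obtain ⟨c, hc⟩ := hsr
  obtain ⟨k, hk⟩ := c.2
  have hc' : t ^ k * (r • 1) = 0 := by
    have := hc
    simp only [OneMemClass.coe_one, one_mul, mul_zero] at this
    rw [show t ^ k = (c : R) from hk]
    simpa using this
  have htr : t ^ k * r = 0 := by simpa using hc'
  have hfin : Finsupp.single N r ∈ LinearMap.range (tdiff t) := by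
    have := single_sub_mem_range t N k r
    rw [htr] at this
    simpa using this
  have := Submodule.add_mem _ hr hfin
  simpa using this


lemma tdiff_inj (t : R) : Function.Injective (tdiff t) := by
  rw [injective_iff_map_eq_zero]
  intro x hx
  have hshift : x = t • Finsupp.mapDomain (· + 1) x := by
    have : x - t • Finsupp.mapDomain (· + 1) x = 0 := by
      have := hx
      simp only [tdiff, LinearMap.sub_apply, LinearMap.id_apply, LinearMap.smul_apply,
        Finsupp.lmapDomain_apply] at this
      exact this
    exact sub_eq_zero.mp this
  have hcoeff : ∀ n, x n = 0 := by
    intro n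
    induction n using Nat.strong_induction_on with
    | _ n ih =>
      match n with
      | 0 =>
          have := congrFun (congrArg DFunLike.coe hshift) 0
          rw [Finsupp.smul_apply, Finsupp.mapDomain_notin_range] at this
          · simpa using this
          · rintro ⟨a, ha⟩; simp at ha
      | Nat.succ m =>
          have := congrFun (congrArg DFunLike.coe hshift) (m + 1)
          rw [Finsupp.smul_apply,
            Finsupp.mapDomain_apply (add_left_injective 1) x m] at this
          rw [this, ih m (Nat.lt_succ_self m), smul_zero]
  exact Finsupp.ext hcoeff

/-- If every linear map from the localization to `C` vanishes, then every
`t`-divisible compatible sequence in `C` vanishes. -/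
lemma seq_zero (t : R) {C : Type u} [AddCommGroup C] [Module R C]
    (hHom : ∀ f : Localization.Away t →ₗ[R] C, f = 0)
    (c : ℕ → C) (hc : ∀ n, t • c (n + 1) = c n) : ∀ n, c n = 0 := by
  set h : (ℕ →₀ R) →ₗ[R] C :=
    Finsupp.lsum ℕ fun n => LinearMap.toSpanSingleton R C (c n) with hh
  have hsingle : ∀ n r, h (Finsupp.single n r) = r • c n := by
    intro n r; simp [hh, LinearMap.toSpanSingleton]
  have hker : LinearMap.ker (taug t) ≤ LinearMap.ker h := by
    intro x hx
    obtain ⟨y, rfl⟩ := ker_le_range t hx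
    rw [LinearMap.mem_ker]
    -- h ∘ tdiff = 0
    have hcomp : h.comp (tdiff t) = 0 := by
      refine Finsupp.lhom_ext fun n r => ?_
      simp only [LinearMap.comp_apply, tdiff_single, map_sub, hsingle, LinearMap.zero_apply]
      rw [← hc n, smul_smul, mul_comm t r, ← smul_smul, smul_smul, sub_self]
    have := congrFun (congrArg DFunLike.coe hcomp) y
    simpa using this
  set q : ((ℕ →₀ R) ⧸ LinearMap.ker (taug t)) →ₗ[R] C :=
    Submodule.liftQ (LinearMap.ker (taug t)) h hker with hq
  set e := LinearMap.quotKerEquivOfSurjective (taug t) (taug_surj t) with he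
  have hf : (q.comp (e.symm : Localization.Away t →ₗ[R] _)) = 0 := hHom _
  intro n
  have h1 : h (Finsupp.single n 1) = 0 := by
    have h2 : q (Submodule.Quotient.mk (Finsupp.single n 1)) = h (Finsupp.single n 1) :=
      Submodule.liftQ_apply _ _ _
    have h3 : q (e.symm (e (Submodule.Quotient.mk (Finsupp.single n 1)))) = 0 := by
      have := congrFun (congrArg DFunLike.coe hf) (e (Submodule.Quotient.mk (Finsupp.single n 1)))
      simpa using this
    rw [LinearEquiv.symm_apply_apply] at h3
    rw [← h2, h3]
  rw [hsingle, one_smul] at h1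
  exact h1

open CategoryTheory Limits

variable (t : R)

/-- The telescope complex `... → 0 → (ℕ →₀ R) → (ℕ →₀ R)`. -/
def tcomplex : ChainComplex (ModuleCat.{u} R) ℕ :=
  ChainComplex.of
    (fun n => match n with
      | 0 => ModuleCat.of R (ℕ →₀ R)
      | 1 => ModuleCat.of R (ℕ →₀ R)
      | _ + 2 => ModuleCat.of R PUnit)
    (fun n => match n with
      | 0 => ModuleCat.ofHom (tdiff t)
      | _ + 1 => 0)
    (fun n => by exact zero_comp)

lemma tcomplex_d10 : (tcomplex t).d 1 0 = ModuleCat.ofHom (tdiff t) := by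
  simp [tcomplex]; exact ChainComplex.of_d _ _ 0

lemma tcomplex_d21 : (tcomplex t).d 2 1 = 0 := by
  simp [tcomplex]; exact ChainComplex.of_d _ _ 1

instance tcomplex_projective (n : ℕ) : Projective ((tcomplex t).X n) := by
  obtain _ | _ | n := n
  · exact ModuleCat.projective_of_free (M := ModuleCat.of R (ℕ →₀ R))
      Finsupp.basisSingleOne
  · exact ModuleCat.projective_of_free (M := ModuleCat.of R (ℕ →₀ R))
      Finsupp.basisSingleOne
  · exact ModuleCat.projective_of_free (M := ModuleCat.of R PUnit)
      (Module.Basis.empty _ : Module.Basis PEmpty.{u+1} R PUnit.{u+1})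

lemma tcomplex_exactAt_succ (n : ℕ) : (tcomplex t).ExactAt (n + 1) := by
  rw [HomologicalComplex.exactAt_iff' _ (n + 2) (n + 1) n (by simp) (by simp)]
  obtain _ | n := n
  · rw [ShortComplex.moduleCat_exact_iff]
    intro (x : ℕ →₀ R) hx
    have hx' : tdiff t x = 0 := by
      have : (tcomplex t).d 1 0 x = 0 := hx
      rwa [tcomplex_d10] at this
    refine ⟨0, ?_⟩
    have : x = 0 := tdiff_inj t (by rw [hx', map_zero])
    rw [this, map_zero]; rfl
  · exact ShortComplex.exact_of_isZero_X₂ _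
      (ModuleCat.isZero_of_subsingleton (ModuleCat.of R PUnit))

lemma tcomplex_d10_taug : (tcomplex t).d 1 0 ≫ ModuleCat.ofHom (taug t) = 0 := by
  rw [tcomplex_d10]
  ext x
  exact congrFun (congrArg DFunLike.coe (taug_tdiff t)) x

/-- The augmentation, as a chain map to the single complex. -/
def tπ : tcomplex t ⟶ (ChainComplex.single₀ (ModuleCat.{u} R)).obj
    (ModuleCat.of R (Localization.Away t)) :=
  (ChainComplex.toSingle₀Equiv _ _).symm ⟨ModuleCat.ofHom (taug t), tcomplex_d10_taug t⟩

lemma tπ_f0 : (tπ t).f 0 = ModuleCat.ofHom (taug t) :=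
  ChainComplex.toSingle₀Equiv_symm_apply_f_zero _ _

/-- The short complex `(ℕ →₀ R) → (ℕ →₀ R) → Localization.Away t`. -/
def tsc : ShortComplex (ModuleCat.{u} R) :=
  ShortComplex.mk (ModuleCat.ofHom (tdiff t)) (ModuleCat.ofHom (taug t))
    (by exact ModuleCat.hom_ext (taug_tdiff t))

lemma tsc_exact : (tsc t).Exact := by
  rw [ShortComplex.moduleCat_exact_iff]
  intro (x : ℕ →₀ R) hx
  exact ker_le_range t (LinearMap.mem_ker.mpr hx)

instance tsc_epi : Epi (tsc t).g := by
  rw [ModuleCat.epi_iff_surjective]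
  exact taug_surj t

/-- The telescope complex as a projective resolution of `Localization.Away t`. -/
def tresolution : ProjectiveResolution (ModuleCat.of R (Localization.Away t)) where
  complex := tcomplex t
  π := tπ t
  quasiIso := ⟨fun n => by
    obtain _ | n := n
    · rw [ChainComplex.quasiIsoAt₀_iff, ShortComplex.quasiIso_iff_of_zeros']
      · refine (ShortComplex.exact_and_epi_g_iff_of_iso
          (S₂ := tsc t) ?_).2 ⟨tsc_exact t, tsc_epi t⟩
        exact ShortComplex.isoMk (Iso.refl _) (Iso.refl _) (Iso.refl _)
          (by simp [tsc, tcomplex_d10]; rfl)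
          (by simp [tsc, tπ_f0]; rfl)
      all_goals rfl
    · rw [quasiIsoAt_iff_exactAt']
      · exact tcomplex_exactAt_succ t n
      · exact ChainComplex.exactAt_succ_single_obj _ _⟩

lemma ext_surj {C : Type u} [AddCommGroup C] [Module R C]
    (hExt : Subsingleton (extM R (Localization.Away t) C 1)) (h : (ℕ →₀ R) →ₗ[R] C) :
    ∃ k : (ℕ →₀ R) →ₗ[R] C, k ∘ₗ tdiff t = h := by
  set Y := (tcomplex t).linearYonedaObj R (ModuleCat.of R C) with hY
  have hz : Limits.IsZero (Y.homology 1) := by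
    have h1 : Limits.IsZero (extM R (Localization.Away t) C 1) :=
      @ModuleCat.isZero_of_subsingleton _ _ _ hExt
    exact h1.of_iso ((tresolution t).isoExt 1 (ModuleCat.of R C)).symm
  have hex := (HomologicalComplex.exactAt_iff_isZero_homology Y 1).2 hz
  rw [HomologicalComplex.exactAt_iff' Y 0 1 2 (by simp) (by simp),
    ShortComplex.moduleCat_exact_iff] at hex
  obtain ⟨k, hk⟩ := hex (ModuleCat.ofHom h)
    ((ModuleCat.isZero_of_subsingleton (ModuleCat.of R PUnit)).eq_of_src _ _)
  refine ⟨k.hom, ?_⟩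
  have hk' : (tcomplex t).d 1 0 ≫ k = ModuleCat.ofHom h := hk
  rw [tcomplex_d10] at hk'
  exact congrArg ModuleCat.Hom.hom hk'

/-- The key consequence: if `C` is a `t`-contramodule, then `1 - t` acts bijectively. -/
lemma contra_bij {C : Type u} [AddCommGroup C] [Module R C]
    (h1 : ∀ f : Localization.Away t →ₗ[R] C, f = 0)
    (h2 : Subsingleton (extM R (Localization.Away t) C 1)) :
    Function.Bijective (fun c : C => (1 - t) • c) := by
  constructor
  · intro a b hab
    have hc : (1 - t) • (a - b) = 0 := by
      simp only at hab
      rw [smul_sub, hab, sub_self]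
    have hfix : t • (a - b) = a - b := by
      rw [sub_smul, one_smul, sub_eq_zero] at hc
      exact hc.symm
    have := seq_zero t h1 (fun _ => a - b) (fun _ => hfix) 0
    exact sub_eq_zero.mp this
  · intro b
    set h : (ℕ →₀ R) →ₗ[R] C :=
      Finsupp.lsum ℕ (fun n => LinearMap.toSpanSingleton R C b) with hh
    obtain ⟨k, hk⟩ := ext_surj t h2 h
    set d : ℕ → C := fun n => k (Finsupp.single n 1) with hd
    have hdr : ∀ n, d n - t • d (n + 1) = b := by
      intro n
      have h3 : k (tdiff t (Finsupp.single n 1)) = b := by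
        rw [← LinearMap.comp_apply, hk, hh]
        simp [LinearMap.toSpanSingleton]
      rw [tdiff_single] at h3
      rw [map_sub] at h3
      rw [mul_one] at h3
      have h4 : k (Finsupp.single (n + 1) t) = t • d (n + 1) := by
        rw [hd]
        rw [show Finsupp.single (n + 1) t = t • Finsupp.single (n + 1) (1 : R) from by
          rw [Finsupp.smul_single', mul_one], map_smul]
      rw [h4] at h3
      exact h3
    have hseq : ∀ n, t • (d (n + 2) - d (n + 1)) = d (n + 1) - d n := by
      intro n
      have := (hdr n).trans (hdr (n + 1)).symm
      have h5 : d n - t • d (n + 1) = d (n + 1) - t • d (n + 2) := this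
      rw [smul_sub]
      calc t • d (n + 2) - t • d (n + 1)
          = (d (n + 1) - t • d (n + 1)) - (d (n + 1) - t • d (n + 2)) := by abel
        _ = (d (n + 1) - t • d (n + 1)) - (d n - t • d (n + 1)) := by rw [h5]
        _ = d (n + 1) - d n := by abel
    have hzero := seq_zero t h1 (fun n => d (n + 1) - d n) hseq 0
    have h01 : d 1 = d 0 := sub_eq_zero.mp hzero
    refine ⟨d 0, ?_⟩
    have := hdr 0
    rw [h01] at this
    show (1 - t) • d 0 = b
    rw [sub_smul, one_smul]
    rw [← this]

end

end Stmt9Aux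

/-- Let `R` be a commutative ring and `𝔪 ⊆ R` a maximal ideal. Then
every element of `R \ 𝔪` acts invertibly on any `𝔪`-contramodule `R`-module `C`
(so the `R`-module structure of `C` extends uniquely to an `R_𝔪`-module structure). -/
theorem stmt9 (R : Type u) [CommRing R] (m : Ideal R) (hm : m.IsMaximal)
    (C : Type u) [AddCommGroup C] [Module R C] (hC : IsIdealContra R m C) :
    ∀ s ∉ m, Function.Bijective fun c : C => s • c := by
  intro s hs
  obtain ⟨r, i, him, hri⟩ := hm.exists_inv hs
  obtain ⟨h1, h2⟩ := hC i him
  have hbij := Stmt9Aux.contra_bij i h1 h2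
  have hrs : (1 : R) - i = r * s := by rw [← hri]; ring
  constructor
  · intro a b hab
    have hab' : s • a = s • b := hab
    have hz : (fun c : C => (1 - i) • c) (a - b) = (fun c : C => (1 - i) • c) 0 := by
      simp only [smul_zero]
      rw [hrs, mul_smul, smul_sub, hab', sub_self, smul_zero]
    have := hbij.1 hz
    exact sub_eq_zero.mp this
  · intro b
    obtain ⟨x, hx⟩ := hbij.2 b
    refine ⟨r • x, ?_⟩
    show s • r • x = b
    rw [smul_smul, mul_comm s r, ← hrs]
    exact hx
end

section
/- Let R be a commutative ring, t ∈ R an element, and C a t-contramodule R-module. If C = tC, then C = 0; equivalently, if C ≠ 0 then C/tC ≠ 0. -/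
universe u

open CategoryTheory

/-- Let `R` be a commutative ring, `t ∈ R`, and `C` a `t`-contramodule
`R`-module. If `C = tC` then `C = 0` (equivalently, `C ≠ 0` implies `C/tC ≠ 0`). -/
theorem stmt14 (R : Type u) [CommRing R] (t : R)
    (C : Type u) [AddCommGroup C] [Module R C] (hC : IsTContra R t C)
    (h : ∀ x : C, ∃ y : C, t • y = x) :
    ∀ x : C, x = 0 := by
  obtain ⟨h0, -⟩ := hC
  intro x0
  -- build a divisibility sequence starting at x0
  obtain ⟨f, hf⟩ : ∃ f : C → C, ∀ c, t • f c = c := ⟨fun c => (h c).choose, fun c => (h c).choose_spec⟩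
  set x : ℕ → C := fun n => Nat.rec x0 (fun _ y => f y) n with hxdef
  have hxs : ∀ n, t • x (n + 1) = x n := fun n => hf _
  have aux : ∀ n k, t ^ k • x (n + k) = x n := by
    intro n k
    induction k with
    | zero => simp
    | succ k ih =>
      have : n + (k + 1) = (n + k) + 1 := rfl
      rw [this, pow_succ, mul_smul, hxs, ih]
  have shift : ∀ (r : R) (n k : ℕ), r • x n = (r * t ^ k) • x (n + k) := by
    intro r n k
    rw [mul_smul, aux]
  have indexeq : ∀ n m : ℕ, t ^ n = t ^ m → x n = x m := by
    intro n m hnm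
    rw [← aux n m, ← hnm, Nat.add_comm n m, aux m n]
  -- exponent function on powers of t
  have he : ∀ s : Submonoid.powers t, ∃ n : ℕ, t ^ n = (s : R) := fun s => s.2
  set e : Submonoid.powers t → ℕ := fun s => (he s).choose with hedef
  have hee : ∀ s : Submonoid.powers t, t ^ e s = (s : R) := fun s => (he s).choose_spec
  -- the function on the localization
  have wd : ∀ {a c : R} {b d : Submonoid.powers t},
      (Localization.r (Submonoid.powers t)) (a, b) (c, d) →
      a • x (e b) = c • x (e d) := by
    intro a c b d hr
    obtain ⟨u, hu⟩ := (Localization.r_iff_exists).mp hr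
    obtain ⟨k, hk⟩ := u.2
    have hk' : t ^ k = (u : R) := hk
    have hu' : t ^ k * ((d : R) * a) = t ^ k * ((b : R) * c) := by rw [hk']; exact hu
    have l1 : a • x (e b) = (a * (t ^ (e d) * t ^ k)) • x (e b + (e d + k)) := by
      rw [shift a (e b) (e d + k), pow_add]
    have l2 : c • x (e d) = (c * (t ^ (e b) * t ^ k)) • x (e d + (e b + k)) := by
      rw [shift c (e d) (e b + k), pow_add]
    rw [l1, l2]
    have hsc : a * (t ^ (e d) * t ^ k) = c * (t ^ (e b) * t ^ k) := by
      rw [hee d, hee b]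
      ring_nf
      ring_nf at hu'
      linear_combination hu'
    rw [hsc]
    have : e b + (e d + k) = e d + (e b + k) := by omega
    rw [this]
  set F : Localization.Away t → C :=
    fun z => Localization.liftOn z (fun a b => a • x (e b)) wd with hFdef
  have Fmk : ∀ (a : R) (b : Submonoid.powers t), F (Localization.mk a b) = a • x (e b) :=
    fun a b => Localization.liftOn_mk _ _ _ _
  have Fmk' : ∀ (a : R) (b : Submonoid.powers t) (k : ℕ), t ^ k = (b : R) →
      F (Localization.mk a b) = a • x k := by
    intro a b k hk
    rw [Fmk, indexeq (e b) k (by rw [hee b, hk])]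
  -- F is linear
  have Fadd : ∀ z w, F (z + w) = F z + F w := by
    intro z w
    refine Localization.induction_on₂ z w ?_
    rintro ⟨a, b⟩ ⟨c, d⟩
    simp only [Localization.add_mk]
    rw [Fmk' _ (b * d) (e b + e d) (by rw [pow_add, hee b, hee d]; rfl),
      Fmk, Fmk, add_smul, mul_smul, mul_smul, ← hee b, ← hee d]
    have k1 : (t ^ (e b)) • (c • x (e b + e d)) = c • x (e d) := by
      rw [smul_comm]
      congr 1
      rw [show e b + e d = e d + e b from Nat.add_comm _ _]
      exact aux (e d) (e b)
    have k2 : (t ^ (e d)) • (a • x (e b + e d)) = a • x (e b) := by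
      rw [smul_comm]
      congr 1
      exact aux (e b) (e d)
    rw [k1, k2, add_comm]
  have Fsmul : ∀ (r : R) (z : Localization.Away t), F (r • z) = r • F z := by
    intro r z
    refine Localization.ind (fun y => ?_) z
    obtain ⟨a, b⟩ := y
    rw [Localization.smul_mk, Fmk, Fmk, smul_eq_mul, mul_smul]
  set L : Localization.Away t →ₗ[R] C :=
    { toFun := F, map_add' := Fadd, map_smul' := Fsmul } with hLdef
  have hL0 : L = 0 := h0 L
  have : F (Localization.mk 1 1) = 0 := by
    have := congrArg (fun g => g (Localization.mk 1 (1 : Submonoid.powers t))) hL0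
    simpa [hLdef] using this
  rw [Fmk' 1 1 0 (by simp), one_smul] at this
  exact this
end

section
/- Let R be a commutative ring and I = (s₁, …, s_m) ⊆ R a finitely generated ideal. Let B be an R-module with B = IB, and let C be an I-contramodule R-module. Then Hom_R(B, C) = 0. Equivalently, an I-contramodule R-module C has no nonzero R-submodule D with D = ID. -/
universe u

open CategoryTheory

/-! ### Auxiliary machinery for `stmt17` -/

noncomputable section



open Pointwise

namespace Stmt17Aux

variable {R : Type u} [CommRing R] {C : Type u} [AddCommGroup C] [Module R C]

/-- every "t-divisible tower" sequence vanishes (from `Hom(R[t⁻¹],C)=0`). -/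
def Hinj (t : R) (C : Type u) [AddCommGroup C] [Module R C] : Prop :=
  ∀ c : ℕ → C, (∀ n, c n = t • c (n + 1)) → ∀ n, c n = 0

/-- the telescope system is solvable (from `Ext¹(R[t⁻¹],C)=0`). -/
def Hsur (t : R) (C : Type u) [AddCommGroup C] [Module R C] : Prop :=
  ∀ x : ℕ → C, ∃ b : ℕ → C, ∀ n, b n = x n + t • b (n + 1)

/-- a submodule closed under "t-power infinite sums". -/
def TClosed (t : R) (K : Submodule R C) : Prop :=
  ∀ x b : ℕ → C, (∀ n, x n ∈ K) → (∀ n, b n = x n + t • b (n + 1)) → ∀ n, b n ∈ K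

variable {t : R}

lemma sol_unique (hinj : Hinj t C) {x b b' : ℕ → C}
    (hb : ∀ n, b n = x n + t • b (n + 1)) (hb' : ∀ n, b' n = x n + t • b' (n + 1)) :
    b = b' := by
  have h : ∀ n, b n - b' n = 0 := by
    apply hinj
    intro n
    rw [hb n, hb' n]
    rw [smul_sub]
    abel
  funext n
  exact sub_eq_zero.mp (h n)

lemma tclosed_sInf {S : Set (Submodule R C)} (hS : ∀ K ∈ S, TClosed t K) :
    TClosed t (sInf S) := by
  intro x b hx hb n
  rw [Submodule.mem_sInf]
  intro K hK
  exact hS K hK x b (fun n => (Submodule.mem_sInf.mp (hx n)) K hK) hb n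

lemma tclosed_bot (hinj : Hinj t C) : TClosed t (⊥ : Submodule R C) := by
  intro x b hx hb n
  have : ∀ n, b n = t • b (n + 1) := by
    intro n
    have := hx n
    rw [Submodule.mem_bot] at this
    rw [hb n, this, zero_add]
  simpa using hinj b this n

lemma tclosed_smul (hinj : Hinj t C) (hsur : Hsur t C) (a : R) {K : Submodule R C}
    (hK : TClosed t K) : TClosed t (a • K) := by
  intro x b hx hb n
  choose y hyK hy using fun n => (Submodule.mem_smul_pointwise_iff_exists _ _ _).mp (hx n)
  obtain ⟨b', hb'⟩ := hsur y
  have hba : b = fun n => a • b' n := by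
    refine sol_unique hinj hb ?_
    intro n
    simp only [hb' n, smul_add, smul_comm t a, hy]
  rw [hba]
  exact Submodule.smul_mem_pointwise_smul _ _ _ (hK y b' hyK hb' n)

lemma tclosed_sup (hinj : Hinj t C) (hsur : Hsur t C) {P Q : Submodule R C}
    (hP : TClosed t P) (hQ : TClosed t Q) : TClosed t (P ⊔ Q) := by
  intro x b hx hb n
  choose p hp q hq hpq using fun n => Submodule.mem_sup.mp (hx n)
  obtain ⟨bp, hbp⟩ := hsur p
  have hbq : ∀ k, (b k - bp k) = q k + t • (b (k+1) - bp (k+1)) := by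
    intro k
    rw [hb k, hbp k, ← hpq k, smul_sub]
    abel
  have h1 : bp n ∈ P := hP p bp hp hbp n
  have h2 : b n - bp n ∈ Q := hQ q (fun k => b k - bp k) hq hbq n
  have : b n = bp n + (b n - bp n) := by abel
  rw [this]
  exact Submodule.add_mem_sup h1 h2

lemma tclosed_ideal_smul (hinj : Hinj t C) (hsur : Hsur t C) (l : List R)
    {K : Submodule R C} (hK : TClosed t K) :
    TClosed t ((Ideal.span {a | a ∈ l}) • K) := by
  induction l with
  | nil =>
      have : {a : R | a ∈ ([] : List R)} = (∅ : Set R) := by ext a; simp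
      rw [this, Ideal.span_empty, Submodule.bot_smul]
      exact tclosed_bot hinj
  | cons hd tl ih =>
      have hset : {a | a ∈ hd :: tl} = insert hd {a | a ∈ tl} := by
        ext a; simp
      rw [hset, Ideal.span_insert, Submodule.sup_smul, Submodule.ideal_span_singleton_smul]
      exact tclosed_sup hinj hsur (tclosed_smul hinj hsur hd hK) ih

end Stmt17Aux

namespace Stmt17Aux

variable {R : Type u} [CommRing R] {C : Type u} [AddCommGroup C] [Module R C]

lemma main_list (l : List R) (H : ∀ t ∈ l, Hinj t C ∧ Hsur t C) :
    ∀ D : Submodule R C, D ≤ (Ideal.span {a | a ∈ l}) • D → D = ⊥ := by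
  induction l with
  | nil =>
      intro D hD
      have hset : {a : R | a ∈ ([] : List R)} = (∅ : Set R) := by ext a; simp
      rw [hset, Ideal.span_empty, Submodule.bot_smul] at hD
      exact le_bot_iff.mp hD
  | cons t tl ih =>
      intro D hD
      have hinj : Hinj t C := (H t (List.mem_cons_self)).1
      have hsur : Hsur t C := (H t (List.mem_cons_self)).2
      have Htl : ∀ u ∈ tl, Hinj u C ∧ Hsur u C := fun u hu => H u (List.mem_cons_of_mem _ hu)
      set J := Ideal.span {a : R | a ∈ tl} with hJ
      have hD' : D ≤ t • D ⊔ J • D := by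
        have hset : {a : R | a ∈ t :: tl} = insert t {a : R | a ∈ tl} := by ext a; simp
        rw [hset, Ideal.span_insert, Submodule.sup_smul,
          Submodule.ideal_span_singleton_smul] at hD
        exact hD
      set K := sInf {K' : Submodule R C | TClosed t K' ∧ J • D ≤ K'} with hK
      have hKc : TClosed t K := tclosed_sInf (fun K' hK' => hK'.1)
      have hJDK : J • D ≤ K := le_sInf (fun K' hK' => hK'.2)
      have hDK : D ≤ K := by
        intro d hd
        have step : ∀ e, e ∈ D → ∃ x, x ∈ J • D ∧ ∃ e', e' ∈ D ∧ e = x + t • e' := by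
          intro e he
          obtain ⟨u, hu, v, hv, huv⟩ := Submodule.mem_sup.mp (hD' he)
          obtain ⟨e', he', rfl⟩ := (Submodule.mem_smul_pointwise_iff_exists _ _ _).mp hu
          exact ⟨v, hv, e', he', by rw [← huv]; abel⟩
        choose x hx e' he' heq using step
        let seq : ℕ → {e : C // e ∈ D} := fun n =>
          Nat.rec ⟨d, hd⟩ (fun _ p => ⟨e' p.1 p.2, he' p.1 p.2⟩) n
        have hseq : ∀ n, (seq n).1 = x (seq n).1 (seq n).2 + t • (seq (n + 1)).1 :=
          fun n => heq _ _
        exact hKc (fun n => x (seq n).1 (seq n).2) (fun n => (seq n).1)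
          (fun n => hJDK (hx _ _)) hseq 0
      have hKJ : K ≤ J • K :=
        sInf_le ⟨tclosed_ideal_smul hinj hsur tl hKc, Submodule.smul_mono le_rfl hDK⟩
      have hK0 : K = ⊥ := ih Htl K hKJ
      exact le_bot_iff.mp (hDK.trans hK0.le)

end Stmt17Aux



namespace Stmt17Aux

variable {R : Type u} [CommRing R] {C : Type u} [AddCommGroup C] [Module R C]

/-- the submodule of t-divisible towers -/
def towerMod (t : R) (C : Type u) [AddCommGroup C] [Module R C] : Submodule R (ℕ → C) where
  carrier := {g | ∀ n, g n = t • g (n + 1)}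
  add_mem' := by
    intro a b ha hb n
    simp only [Pi.add_apply, ha n, hb n, smul_add]
  zero_mem' := by intro n; simp
  smul_mem' := by
    intro r g hg n
    simp only [Pi.smul_apply, hg n, smul_comm r t]

def towerShift (t : R) (C : Type u) [AddCommGroup C] [Module R C] :
    towerMod t C →ₗ[R] towerMod t C where
  toFun g := ⟨fun n => g.1 (n + 1), fun n => g.2 (n + 1)⟩
  map_add' a b := rfl
  map_smul' r a := rfl

lemma hinj_of_hom (t : R) (h : ∀ f : Localization.Away t →ₗ[R] C, f = 0) : Hinj t C := by
  suffices h0 : ∀ c : ℕ → C, (∀ n, c n = t • c (n + 1)) → c 0 = 0 by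
    intro c hc n
    exact h0 (fun k => c (n + k)) (fun k => hc (n + k))
  intro c hc
  have hunit : ∀ x : Submonoid.powers t,
      IsUnit ((algebraMap R (Module.End R (towerMod t C))) (x : R)) := by
    rintro ⟨y, k, rfl⟩
    rw [map_pow]
    apply IsUnit.pow
    exact ⟨⟨algebraMap R (Module.End R (towerMod t C)) t, towerShift t C,
      by ext g n; exact (g.2 n).symm, by ext g n; exact (g.2 n).symm⟩, rfl⟩
  let ev : towerMod t C →ₗ[R] C := (LinearMap.proj 0).comp (towerMod t C).subtype
  have h0 := h (ev.comp (IsLocalizedModule.lift (Submonoid.powers t)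
      (Algebra.linearMap R (Localization.Away t))
      (LinearMap.toSpanSingleton R (towerMod t C) ⟨c, hc⟩) hunit))
  have h1 := LinearMap.congr_fun h0 ((Algebra.linearMap R (Localization.Away t)) 1)
  rw [LinearMap.zero_apply, LinearMap.comp_apply, IsLocalizedModule.lift_apply] at h1
  simpa [ev] using h1

end Stmt17Aux



namespace Stmt17Aux

variable {R : Type u} [CommRing R]

/-- telescope differential `e n ↦ e n - t • e (n+1)`. -/
noncomputable def teleD (t : R) : (ℕ →₀ R) →ₗ[R] (ℕ →₀ R) :=
  Finsupp.lsum ℕ fun n =>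
    LinearMap.toSpanSingleton R _ (Finsupp.single n 1 - t • Finsupp.single (n + 1) 1)

lemma teleD_eq (t : R) (c : ℕ →₀ R) :
    teleD t c = c - t • Finsupp.mapDomain Nat.succ c := by
  have : teleD t = LinearMap.id - t • (Finsupp.lmapDomain R R Nat.succ) := by
    apply Finsupp.lhom_ext
    intro n b
    simp [teleD, Finsupp.single_sub, smul_sub, Finsupp.smul_single, mul_comm]
  rw [this]
  simp [Finsupp.lmapDomain_apply]

lemma teleD_apply_zero (t : R) (c : ℕ →₀ R) : (teleD t c) 0 = c 0 := by
  rw [teleD_eq]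
  have h0 : Finsupp.mapDomain Nat.succ c 0 = 0 :=
    Finsupp.mapDomain_notin_range _ _ (by simp [Nat.succ_ne_zero])
  simp [h0]

lemma teleD_apply_succ (t : R) (c : ℕ →₀ R) (k : ℕ) :
    (teleD t c) (k + 1) = c (k + 1) - t * c k := by
  rw [teleD_eq]
  have h1 : Finsupp.mapDomain Nat.succ c (k + 1) = c k :=
    Finsupp.mapDomain_apply Nat.succ_injective _ _
  simp [h1]

lemma teleD_injective (t : R) : Function.Injective (teleD t) := by
  intro c c' h
  have hz : teleD t (c - c') = 0 := by rw [map_sub, h, sub_self]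
  have hall : ∀ k, (c - c') k = 0 := by
    intro k
    induction k with
    | zero =>
        have := DFunLike.congr_fun hz 0
        simpa [teleD_apply_zero] using this
    | succ k ih =>
        have := DFunLike.congr_fun hz (k + 1)
        simp only [teleD_apply_succ, Finsupp.coe_zero, Pi.zero_apply] at this
        rw [sub_eq_zero] at this
        rw [this, ih, mul_zero]
  exact sub_eq_zero.mp (Finsupp.ext hall)

end Stmt17Aux

namespace Stmt17Aux

variable {R : Type u} [CommRing R]

/-- augmentation `e n ↦ 1 / t^n`. -/
noncomputable def tele0 (t : R) : (ℕ →₀ R) →ₗ[R] Localization.Away t :=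
  Finsupp.lsum ℕ fun n =>
    LinearMap.toSpanSingleton R _ (Localization.mk 1 ⟨t ^ n, n, rfl⟩)

lemma mk_mul_pow (t : R) (r : R) (i N : ℕ) (hiN : i ≤ N) :
    r • Localization.mk (1 : R) (⟨t ^ i, i, rfl⟩ : Submonoid.powers t) =
      Localization.mk (r * t ^ (N - i)) (⟨t ^ N, N, rfl⟩ : Submonoid.powers t) := by
  rw [Localization.smul_mk, smul_eq_mul, mul_one, Localization.mk_eq_mk_iff,
    Localization.r_iff_exists]
  refine ⟨1, ?_⟩
  simp only [OneMemClass.coe_one, one_mul]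
  have hN' : i + (N - i) = N := Nat.add_sub_cancel' hiN
  calc t ^ N * r = t ^ (i + (N - i)) * r := by rw [hN']
    _ = t ^ i * (r * t ^ (N - i)) := by rw [pow_add]; ring

lemma tele0_comp_teleD (t : R) : (tele0 t).comp (teleD t) = 0 := by
  apply Finsupp.lhom_ext
  intro n b
  have key : t • Localization.mk (1 : R) (⟨t ^ (n+1), n+1, rfl⟩ : Submonoid.powers t)
      = Localization.mk 1 (⟨t ^ n, n, rfl⟩ : Submonoid.powers t) := by
    rw [Localization.smul_mk, smul_eq_mul, mul_one, Localization.mk_eq_mk_iff,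
      Localization.r_iff_exists]
    exact ⟨1, by simp [pow_succ, mul_comm]⟩
  simp only [LinearMap.comp_apply, LinearMap.zero_apply, teleD, tele0, Finsupp.lsum_single,
    LinearMap.toSpanSingleton_apply, map_smul, map_sub]
  rw [one_smul, one_smul, key]
  simp

lemma tele0_surjective (t : R) : Function.Surjective (tele0 t) := by
  intro z
  induction z using Localization.induction_on with
  | H p =>
      obtain ⟨r, s⟩ := p
      obtain ⟨u, n, rfl⟩ := s
      refine ⟨Finsupp.single n r, ?_⟩
      simp only [tele0, Finsupp.lsum_single, LinearMap.toSpanSingleton_apply,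
        Localization.smul_mk, smul_eq_mul, mul_one]

lemma tele_mk_sum {t : R} {ι : Type} [DecidableEq ι] (s : Finset ι) (f : ι → R)
    (d : Submonoid.powers t) :
    (∑ i ∈ s, Localization.mk (f i) d) = Localization.mk (∑ i ∈ s, f i) d := by
  induction s using Finset.induction_on with
  | empty => simp [Localization.mk_zero]
  | insert _ _ hni ih =>
      rw [Finset.sum_insert hni, Finset.sum_insert hni, ih, Localization.add_mk_self]

lemma teleD_ker (t : R) (c : ℕ →₀ R) (hc : tele0 t c = 0) : ∃ b, teleD t b = c := by
  classical
  set N := c.support.sup id with hN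
  have hsupp : ∀ i, i ∈ c.support → i ≤ N := fun i hi => Finset.le_sup (f := id) hi
  have hcz : ∀ i, N < i → c i = 0 := by
    intro i hi
    by_contra hne
    exact absurd (hsupp i (Finsupp.mem_support_iff.mpr hne)) (not_le.mpr hi)
  set A : R := ∑ i ∈ Finset.range (N + 1), c i * t ^ (N - i) with hA
  have h1 : tele0 t c = Localization.mk A (⟨t ^ N, N, rfl⟩ : Submonoid.powers t) := by
    rw [tele0, Finsupp.lsum_apply]
    rw [Finsupp.sum_of_support_subset c (s := Finset.range (N + 1))
      (fun i hi => Finset.mem_range.mpr (Nat.lt_succ_of_le (hsupp i hi))) _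
      (fun i _ => by simp)]
    rw [hA, ← tele_mk_sum]
    apply Finset.sum_congr rfl
    intro i hi
    exact mk_mul_pow t (c i) i N (Nat.lt_succ_iff.mp (Finset.mem_range.mp hi))
  rw [hc] at h1
  have h2 : ∃ k : ℕ, t ^ k * A = 0 := by
    have h0 : (0 : Localization.Away t) =
        Localization.mk (0 : R) (⟨t ^ N, N, rfl⟩ : Submonoid.powers t) :=
      (Localization.mk_zero _).symm
    rw [h0, Localization.mk_eq_mk_iff, Localization.r_iff_exists] at h1
    obtain ⟨u, hu⟩ := h1
    obtain ⟨k, hk⟩ := u.2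
    have hk' : t ^ k = (u : R) := hk
    refine ⟨k + N, ?_⟩
    have : (0 : R) = ↑u * (t ^ N * A) := by simpa using hu
    rw [pow_add, mul_assoc, hk', ← this]
  obtain ⟨k, hk⟩ := h2
  set g : ℕ → R := fun j => ∑ i ∈ Finset.range (j + 1), t ^ (j - i) * c i with hg
  have hg0 : g 0 = c 0 := by simp [hg]
  have hgsucc : ∀ j, g (j + 1) = c (j + 1) + t * g j := by
    intro j
    have hcong : ∀ i ∈ Finset.range (j + 1), t ^ (j + 1 - i) * c i = t * (t ^ (j - i) * c i) := by
      intro i hi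
      have hij : i ≤ j := Nat.lt_succ_iff.mp (Finset.mem_range.mp hi)
      have : j + 1 - i = (j - i) + 1 := by omega
      rw [this, pow_succ]; ring
    rw [hg]
    simp only
    rw [Finset.sum_range_succ, Nat.sub_self, pow_zero, one_mul,
      Finset.sum_congr rfl hcong, ← Finset.mul_sum]
    ring
  have hgNk : g (N + k) = 0 := by
    have hsub : Finset.range (N + 1) ⊆ Finset.range (N + k + 1) := by
      intro i hi
      simp only [Finset.mem_range] at hi ⊢
      omega
    have hvan : ∀ i ∈ Finset.range (N + k + 1), i ∉ Finset.range (N + 1) →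
        t ^ (N + k - i) * c i = 0 := by
      intro i _ hi2
      have : N < i := by simpa [Nat.lt_succ_iff, not_le] using hi2
      rw [hcz i this, mul_zero]
    have hcong : ∀ i ∈ Finset.range (N + 1), t ^ (N + k - i) * c i
        = t ^ k * (c i * t ^ (N - i)) := by
      intro i hi
      have hij : i ≤ N := Nat.lt_succ_iff.mp (Finset.mem_range.mp hi)
      have : N + k - i = k + (N - i) := by omega
      rw [this, pow_add]; ring
    rw [hg]
    simp only
    rw [← Finset.sum_subset hsub hvan, Finset.sum_congr rfl hcong, ← Finset.mul_sum, ← hA, hk]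
  have hgbig : ∀ m, g (N + k + m) = 0 := by
    intro m
    induction m with
    | zero => exact hgNk
    | succ m ih =>
        have : N + k + (m + 1) = (N + k + m) + 1 := by omega
        rw [this, hgsucc, ih, mul_zero, add_zero, hcz _ (by omega)]
  refine ⟨Finsupp.onFinset (Finset.range (N + k + 1)) g ?_, ?_⟩
  · intro a ha
    simp only [Finset.mem_range]
    by_contra h'
    have : a = N + k + (a - (N + k)) := by omega
    exact ha (by rw [this]; exact hgbig _)
  · apply Finsupp.ext
    intro j
    cases j with
    | zero => rw [teleD_apply_zero, Finsupp.onFinset_apply, hg0]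
    | succ j =>
        rw [teleD_apply_succ, Finsupp.onFinset_apply, Finsupp.onFinset_apply, hgsucc]
        ring

end Stmt17Aux


namespace Stmt17Aux

open CategoryTheory Limits

variable {R : Type u} [CommRing R]

noncomputable def telComplex (t : R) : ChainComplex (ModuleCat.{u} R) ℕ :=
  ChainComplex.of
    (fun n => match n with
      | 0 => ModuleCat.of R (ℕ →₀ R)
      | 1 => ModuleCat.of R (ℕ →₀ R)
      | _ + 2 => ModuleCat.of R PUnit)
    (fun n => match n with
      | 0 => ModuleCat.ofHom (teleD t)
      | _ + 1 => 0)
    (fun _ => zero_comp)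

lemma telComplex_d10 (t : R) : (telComplex t).d 1 0 = ModuleCat.ofHom (teleD t) :=
  rfl

lemma telComplex_d21 (t : R) : (telComplex t).d 2 1 = 0 :=
  rfl

noncomputable def telRes (t : R) :
    ProjectiveResolution (ModuleCat.of R (Localization.Away t)) where
  complex := telComplex t
  projective n := by
    match n with
    | 0 => exact ModuleCat.projective_of_free (ι := ℕ) Finsupp.basisSingleOne
    | 1 => exact ModuleCat.projective_of_free (ι := ℕ) Finsupp.basisSingleOne
    | n + 2 =>
        haveI : Subsingleton ((telComplex t).X (n + 2)) := inferInstanceAs (Subsingleton PUnit)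
        exact (ModuleCat.isZero_of_subsingleton _).projective
  π := (ChainComplex.toSingle₀Equiv _ _).symm
    ⟨ModuleCat.ofHom (tele0 t), by
      rw [telComplex_d10]
      exact congrArg ModuleCat.ofHom (tele0_comp_teleD t)⟩
  quasiIso := ⟨fun n => by
    cases n with
    | zero =>
        rw [ChainComplex.quasiIsoAt₀_iff, ShortComplex.quasiIso_iff_of_zeros']
        · constructor
          · rw [ShortComplex.moduleCat_exact_iff]
            intro x hx
            dsimp at hx ⊢
            change tele0 t x = 0 at hx
            obtain ⟨b, hb⟩ := teleD_ker t x hx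
            refine ⟨b, ?_⟩
            exact hb
          · rw [ModuleCat.epi_iff_surjective]
            exact tele0_surjective t
        · exact (telComplex t).shape 0 0 (by simp)
        · simp
          rfl
        · simp
          rfl
    | succ n =>
        rw [quasiIsoAt_iff_exactAt']
        · rw [HomologicalComplex.exactAt_iff' _ (n + 2) (n + 1) n (by simp) (by simp)]
          cases n with
          | zero =>
              rw [ShortComplex.moduleCat_exact_iff]
              intro x hx
              change teleD t x = 0 at hx
              have hx0 : x = 0 := by
                apply teleD_injective t
                exact hx.trans (map_zero (teleD t)).symm
              exact ⟨0, by rw [hx0]; exact map_zero _⟩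
          | succ n =>
              exact ShortComplex.exact_of_isZero_X₂ _
                (@ModuleCat.isZero_of_subsingleton _ _ _
                  (inferInstanceAs (Subsingleton PUnit)))
        · exact ChainComplex.exactAt_succ_single_obj _ _⟩

end Stmt17Aux

namespace Stmt17Aux

variable {R : Type u} [CommRing R]

lemma teleD_single (t : R) (n : ℕ) :
    teleD t (Finsupp.single n 1) = Finsupp.single n 1 - t • Finsupp.single (n + 1) 1 := by
  simp [teleD]

open CategoryTheory Limits

lemma hsur_of_ext (t : R) {CC : Type u} [AddCommGroup CC] [Module R CC]
    (h : Subsingleton (((_root_.Ext R (ModuleCat.{u} R) 1).obj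
      (Opposite.op (ModuleCat.of R (Localization.Away t)))).obj (ModuleCat.of R CC))) :
    ∀ x : ℕ → CC, ∃ b : ℕ → CC, ∀ n, b n = x n + t • b (n + 1) := by
  set K := (telComplex t).linearYonedaObj R (ModuleCat.of R CC) with hKdef
  haveI hs : Subsingleton (K.homology 1) := by
    have e : (((_root_.Ext R (ModuleCat.{u} R) 1).obj
        (Opposite.op (ModuleCat.of R (Localization.Away t)))).obj (ModuleCat.of R CC))
        ≃ₗ[R] K.homology 1 :=
      ((telRes t).isoExt 1 (ModuleCat.of R CC)).toLinearEquiv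
    exact Equiv.subsingleton e.symm.toEquiv
  have hz : IsZero (K.homology 1) := @ModuleCat.isZero_of_subsingleton _ _ _ hs
  have hex : K.ExactAt 1 := (HomologicalComplex.exactAt_iff_isZero_homology K 1).mpr hz
  rw [HomologicalComplex.exactAt_iff' K 0 1 2 (by simp) (by simp)] at hex
  rw [ShortComplex.moduleCat_exact_iff] at hex
  intro x
  let gx : (telComplex t).X 1 ⟶ ModuleCat.of R CC :=
    ModuleCat.ofHom (Finsupp.lsum ℕ fun n => LinearMap.toSpanSingleton R CC (x n))
  have hgx : (HomologicalComplex.sc' K 0 1 2).g gx = 0 := by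
    change (telComplex t).d 2 1 ≫ gx = 0
    rw [telComplex_d21]
    have hzc : ((0 : (telComplex t).X 2 ⟶ (telComplex t).X 1)) ≫ gx = 0 := zero_comp
    exact hzc
  obtain ⟨hmap, hh⟩ := hex gx hgx
  let hm : (telComplex t).X 0 ⟶ ModuleCat.of R CC := hmap
  have hh' : ModuleCat.ofHom (teleD t) ≫ hm = gx := by
    dsimp [hKdef] at hh
    exact hh
  refine ⟨fun n => hm (Finsupp.single n 1), ?_⟩
  intro n
  have key : hm (teleD t (Finsupp.single n 1)) = x n := by
    have h3 := congrArg (fun φ => φ (Finsupp.single n 1)) hh'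
    have h4 : hm (teleD t (Finsupp.single n 1))
        = (Finsupp.lsum ℕ fun k => LinearMap.toSpanSingleton R CC (x k))
            (Finsupp.single n 1) := h3
    rw [Finsupp.lsum_single, LinearMap.toSpanSingleton_apply, one_smul] at h4
    exact h4
  let φ : (ℕ →₀ R) →ₗ[R] CC := hm.hom
  change φ (teleD t (Finsupp.single n 1)) = x n at key
  show φ (Finsupp.single n 1) = x n + t • φ (Finsupp.single (n + 1) 1)
  rw [teleD_single, map_sub, map_smul] at key
  rw [← key]
  abel

end Stmt17Aux

end

/-- Let `R` be a commutative ring and `I = (s₁, …, s_m) ⊆ R` a finitely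
generated ideal. Let `B` be an `R`-module with `B = IB` and `C` an `I`-contramodule
`R`-module. Then `Hom_R(B, C) = 0`; equivalently, an `I`-contramodule `R`-module has no
nonzero submodule `D` with `D = ID`. -/
theorem stmt17 (R : Type u) [CommRing R] (m : ℕ) (s : Fin m → R) (I : Ideal R)
    (hIs : I = Ideal.span (Set.range s))
    (B : Type u) [AddCommGroup B] [Module R B] (hB : I • (⊤ : Submodule R B) = ⊤)
    (C : Type u) [AddCommGroup C] [Module R C] (hC : IsIdealContra R I C) :
    ∀ f : B →ₗ[R] C, f = 0 := by
  classical
  intro f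
  have hIC : ∀ t ∈ I, Stmt17Aux.Hinj t C ∧ Stmt17Aux.Hsur t C := by
    intro t ht
    obtain ⟨h1, h2⟩ := hC t ht
    exact ⟨Stmt17Aux.hinj_of_hom t h1, Stmt17Aux.hsur_of_ext t h2⟩
  set l := List.ofFn s with hl
  have hset : {a : R | a ∈ l} = Set.range s := by
    ext a; simp [hl, List.mem_ofFn]
  have hmem : ∀ t ∈ l, t ∈ I := by
    intro t ht
    rw [hIs]
    exact Ideal.subset_span (by rw [← hset]; exact ht)
  have hrange : LinearMap.range f ≤ Ideal.span {a : R | a ∈ l} • LinearMap.range f := by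
    rw [hset, ← hIs]
    have hcalc : LinearMap.range f = I • LinearMap.range f := by
      calc LinearMap.range f = Submodule.map f ⊤ := LinearMap.range_eq_map f
        _ = Submodule.map f (I • ⊤) := by rw [hB]
        _ = I • Submodule.map f ⊤ := Submodule.map_smul'' I ⊤ f
        _ = I • LinearMap.range f := by rw [← LinearMap.range_eq_map]
    exact hcalc.le
  have hbot := Stmt17Aux.main_list (R := R) (C := C) l
    (fun t ht => hIC t (hmem t ht)) (LinearMap.range f) hrange
  exact LinearMap.range_eq_bot.mp hbot
end

section
/- Let u : R → U be a flat epimorphism of commutative rings and I ⊆ R an ideal with IU = U. Then for any R-module D annihilated by I (i.e., any R/I-module), one has Ext^i_R(U, D) = 0 for all i ≥ 0; in particular, D is a u-contramodule. -/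
universe u

open CategoryTheory

noncomputable section StmtAux
private abbrev Fy (R : Type u) [CommRing R] (N : Type u) [AddCommGroup N] [Module R N] :
    ModuleCat.{u} R ⥤ (ModuleCat.{u} R)ᵒᵖ :=
  ((linearYoneda R (ModuleCat.{u} R)).obj (ModuleCat.of R N)).rightOp

section Aux
variable {R : Type u} [CommRing R] {M M' M'' N : Type u} [AddCommGroup M] [Module R M]
    [AddCommGroup M'] [Module R M'] [AddCommGroup M''] [Module R M'']
    [AddCommGroup N] [Module R N]

private lemma extPull_eq_conj (f : M' →ₗ[R] M) (n : ℕ)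
    (φ : (projectiveResolution (ModuleCat.of R M')).complex ⟶
      (projectiveResolution (ModuleCat.of R M)).complex)
    (comm : φ.f 0 ≫ (projectiveResolution (ModuleCat.of R M)).π.f 0 =
      (projectiveResolution (ModuleCat.of R M')).π.f 0 ≫ ModuleCat.ofHom f) :
    extPull (N := N) R f n =
      (((projectiveResolution (ModuleCat.of R M')).isoLeftDerivedObj (Fy R N) n).hom ≫
        ((Fy R N).mapHomologicalComplex _ ⋙ HomologicalComplex.homologyFunctor _ _ n).map φ ≫
        ((projectiveResolution (ModuleCat.of R M)).isoLeftDerivedObj (Fy R N) n).inv).unop.hom := by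
  have h := CategoryTheory.ProjectiveResolution.isoLeftDerivedObj_hom_naturality
    (ModuleCat.ofHom f) (projectiveResolution (ModuleCat.of R M'))
    (projectiveResolution (ModuleCat.of R M)) φ comm (Fy R N) n
  show (((Fy R N).leftDerived n).map (ModuleCat.ofHom f)).unop.hom = _
  refine congrArg (fun (x : ((Fy R N).leftDerived n).obj (ModuleCat.of R M') ⟶
    ((Fy R N).leftDerived n).obj (ModuleCat.of R M)) => x.unop.hom) ?_
  rw [← Category.assoc, ← h, Category.assoc, Iso.hom_inv_id, Category.comp_id]

private lemma extPull_add (f g : M' →ₗ[R] M) (n : ℕ) :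
    extPull (N := N) R (f + g) n = extPull (N := N) R f n + extPull (N := N) R g n := by
  set P := projectiveResolution (ModuleCat.of R M')
  set Q := projectiveResolution (ModuleCat.of R M)
  have comm : (ProjectiveResolution.lift (ModuleCat.ofHom f) P Q +
      ProjectiveResolution.lift (ModuleCat.ofHom g) P Q).f 0 ≫ Q.π.f 0 =
      P.π.f 0 ≫ ModuleCat.ofHom (f + g) := by
    simp only [HomologicalComplex.add_f_apply, Preadditive.add_comp,
      ProjectiveResolution.lift_commutes_zero, ← Preadditive.comp_add]
    rfl
  rw [extPull_eq_conj (f + g) n _ comm,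
    extPull_eq_conj (N := N) f n _ (ProjectiveResolution.lift_commutes_zero _ P Q),
    extPull_eq_conj (N := N) g n _ (ProjectiveResolution.lift_commutes_zero _ P Q)]
  rw [Functor.map_add, Preadditive.add_comp, Preadditive.comp_add, unop_add, ModuleCat.hom_add]
  rfl

private lemma extPull_id (n : ℕ) :
    extPull (N := N) R (LinearMap.id : M →ₗ[R] M) n = LinearMap.id := by
  show (((Fy R N).leftDerived n).map (𝟙 (ModuleCat.of R M))).unop.hom = _
  rw [CategoryTheory.Functor.map_id]
  rfl

private lemma extPull_comp (f : M' →ₗ[R] M) (g : M'' →ₗ[R] M') (n : ℕ) :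
    extPull (N := N) R (f ∘ₗ g) n = (extPull (N := N) R g n) ∘ₗ (extPull (N := N) R f n) := by
  show (((Fy R N).leftDerived n).map (ModuleCat.ofHom g ≫ ModuleCat.ofHom f)).unop.hom = _
  rw [CategoryTheory.Functor.map_comp]
  rfl

private lemma extPull_annihilated {r : R} (hr : ∀ x : N, r • x = 0) (n : ℕ) :
    extPull (N := N) R (r • (LinearMap.id : M →ₗ[R] M)) n = 0 := by
  set P := projectiveResolution (ModuleCat.of R M)
  let φ : P.complex ⟶ P.complex :=
    { f := fun i => r • 𝟙 _
      comm' := by intro i j _; simp [Linear.smul_comp, Linear.comp_smul] }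
  have comm : φ.f 0 ≫ P.π.f 0 = P.π.f 0 ≫ ModuleCat.ofHom (r • (LinearMap.id : M →ₗ[R] M)) := by
    show (r • 𝟙 _) ≫ P.π.f 0 = P.π.f 0 ≫ (r • 𝟙 (ModuleCat.of R M))
    rw [Linear.smul_comp, Category.id_comp]
    ext x
    rfl
  rw [extPull_eq_conj _ n φ comm]
  have hz : ((Fy R N).mapHomologicalComplex _).map φ = 0 := by
    ext i : 2
    show (((linearYoneda R (ModuleCat.{u} R)).obj (ModuleCat.of R N)).map (φ.f i).op).op = _
    have h0 : ((linearYoneda R (ModuleCat.{u} R)).obj (ModuleCat.of R N)).map (φ.f i).op = 0 := by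
      apply ModuleCat.hom_ext; apply LinearMap.ext; intro (h : P.complex.X i ⟶ ModuleCat.of R N)
      apply ModuleCat.hom_ext; apply LinearMap.ext; intro x
      show ((r • 𝟙 (P.complex.X i)) ≫ h).hom x = _
      rw [Linear.smul_comp]
      show r • ((𝟙 (P.complex.X i) ≫ h).hom x) = (0 : P.complex.X i ⟶ ModuleCat.of R N).hom x
      rw [Category.id_comp]
      rw [hr]
      rfl
    rw [h0]
    rfl
  rw [Functor.comp_map, hz, Functor.map_zero, Limits.zero_comp, Limits.comp_zero]
  rfl
end Aux
end StmtAux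

/-- Let `u : R → U` be a flat epimorphism of commutative rings (here
`u = algebraMap R U`) and `I ⊆ R` an ideal with `IU = U`. Then for any `R`-module `D`
annihilated by `I` (i.e. any `R/I`-module), one has `Ext^i_R(U, D) = 0` for all `i ≥ 0`;
in particular `Hom_R(U, D) = 0`, so `D` is a `u`-contramodule. -/
theorem stmt18 (R U : Type u) [CommRing R] [CommRing U] [Algebra R U]
    (hflat : Module.Flat R U) (hepi : IsRingEpi R U)
    (I : Ideal R) (hI : Ideal.map (algebraMap R U) I = ⊤)
    (D : Type u) [AddCommGroup D] [Module R D] (hD : ∀ r ∈ I, ∀ x : D, r • x = 0) :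
    (∀ i : ℕ, Subsingleton (extM R U D i)) ∧ (∀ f : U →ₗ[R] D, f = 0) := by
  have h1 : (1 : U) ∈ Ideal.map (algebraMap R U) I := hI ▸ Submodule.mem_top
  have h1' : (1 : U) ∈ Submodule.span U ((algebraMap R U) '' ↑I) := h1
  constructor
  · intro i
    have key : ∀ w ∈ Submodule.span U ((algebraMap R U) '' ↑I),
        extPull (N := D) R ((LinearMap.mul R U) w) i = 0 := by
      intro w hw
      induction hw using Submodule.span_induction with
      | mem x hx =>
        obtain ⟨r, hrI, rfl⟩ := hx
        have hm : (LinearMap.mul R U) (algebraMap R U r) = r • (LinearMap.id : U →ₗ[R] U) := by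
          ext x
          show algebraMap R U r * x = r • x
          rw [Algebra.smul_def]
        rw [hm]
        exact extPull_annihilated (fun x => hD r hrI x) i
      | zero =>
        rw [map_zero]
        have h := extPull_add (N := D) (0 : U →ₗ[R] U) 0 i
        rw [add_zero] at h
        exact (left_eq_add.mp h)
      | add x y hx hy ihx ihy =>
        rw [map_add, extPull_add, ihx, ihy, add_zero]
      | smul c x hx ih =>
        have hm : (LinearMap.mul R U) (c • x) =
            ((LinearMap.mul R U) c) ∘ₗ ((LinearMap.mul R U) x) := by
          ext a
          show (c • x) * a = c * (x * a)
          rw [smul_eq_mul, mul_assoc]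
        rw [hm, extPull_comp, ih, LinearMap.zero_comp]
    have hid : extPull (N := D) R (LinearMap.id : U →ₗ[R] U) i = 0 := by
      have hm : (LinearMap.mul R U) (1 : U) = (LinearMap.id : U →ₗ[R] U) := by
        ext a; exact one_mul a
      rw [← hm]
      exact key 1 h1'
    refine ⟨fun a b => ?_⟩
    have hz : ∀ a : extM R U D i, a = 0 := by
      intro a
      calc a = LinearMap.id a := (LinearMap.id_apply a).symm
        _ = extPull (N := D) R (LinearMap.id : U →ₗ[R] U) i a := by rw [extPull_id]
        _ = (0 : extM R U D i →ₗ[R] extM R U D i) a := by rw [hid]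
        _ = 0 := rfl
    rw [hz a, hz b]
  · intro f
    have key : ∀ w ∈ Submodule.span U ((algebraMap R U) '' ↑I), ∀ x : U, f (w * x) = 0 := by
      intro w hw
      induction hw using Submodule.span_induction with
      | mem x hx =>
        obtain ⟨r, hrI, rfl⟩ := hx
        intro x
        rw [← Algebra.smul_def, map_smul]
        exact hD r hrI _
      | zero => intro x; rw [zero_mul, map_zero]
      | add a b ha hb iha ihb => intro x; rw [add_mul, map_add, iha, ihb, add_zero]
      | smul c a ha ih =>
        intro x
        rw [smul_eq_mul, mul_assoc, mul_left_comm]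
        exact ih (c * x)
    ext x
    have := key 1 h1' x
    rw [one_mul] at this
    rw [this]
    rfl
end
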